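/- arXiv:1906.02388 — 3 statements merged into one kernel-verified Lean document; each statement's English description precedes it below -/
import Mathlib

section
/- Let n ≥ 2, 0 < α, β < 2, λ ∈ ℝ, and let Ω be an unbounded open subset of Σ_λ. Let U ∈ L_α ∩ C^{1,1}_loc(Ω) and V ∈ L_β ∩ C^{1,1}_loc(Ω) be lower semi-continuous on the closure of Ω, anti-symmetric about T_λ (U(x^λ) = -U(x), V(x^λ) = -V(x) for all x), and suppose: (-Δ)^{α/2}U(x) + C₂(x)U(x) + C₃(x)V(x) ≥ 0 and (-Δ)^{β/2}V(x) + C₁(x)U(x) ≥ 0 for all x ∈ Ω; U(x) ≥ 0 and V(x) ≥ 0 on Σ_λ ∖ Ω; C₁(x) < 0, C₃(x) < 0, C₂(x) > 0 on Ω; there exist m > β and constants c, c' > 0 such that c/|x|^m ≤ -C₁(x) ≤ c'/|x|^m for |x| sufficiently large; and C₃(x) → 0 as |x| → ∞. Then there exists R₀ > 0 such that: if U attains its minimum over Ω at a point x⁰ with U(x⁰) < 0 and V attains its minimum over Ω at a point x¹ with V(x¹) < 0, then |x⁰| ≤ R₀ or |x¹| ≤ R₀. -/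
open MeasureTheory Filter Metric Set Bornology

noncomputable section

/-- The space `ℝⁿ`. -/
abbrev En (n : ℕ) := EuclideanSpace ℝ (Fin n)

/-- Membership in the weighted space `L_σ`. -/
def MemL (n : ℕ) (σ : ℝ) (w : En n → ℝ) : Prop :=
  LocallyIntegrable w volume ∧
    Integrable (fun x : En n => |w x| / (1 + ‖x‖ ^ ((n : ℝ) + σ))) volume

/-- `C^{1,1}_loc` on an open set `Ω`: near every point of `Ω`, `w` is
differentiable with Lipschitz-continuous derivative. -/
def C11locOn (n : ℕ) (Ω : Set (En n)) (w : En n → ℝ) : Prop :=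
  ∀ x ∈ Ω, ∃ ε > 0, ∃ K : NNReal, ball x ε ⊆ Ω ∧
    (∀ y ∈ ball x ε, DifferentiableAt ℝ w y) ∧
    LipschitzOnWith K (fderiv ℝ w) (ball x ε)

/-- `C^{1,1}_loc` on all of `ℝⁿ`. -/
def C11loc (n : ℕ) (w : En n → ℝ) : Prop := C11locOn n univ w

/-- `HasFracLap n σ c w x L` : the fractional Laplacian `(-Δ)^{σ/2} w`, with
normalization constant `c = C_{n,σ} > 0`, exists at `x` as a principal value
and is equal to `L`. -/
def HasFracLap (n : ℕ) (σ c : ℝ) (w : En n → ℝ) (x : En n) (L : ℝ) : Prop :=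
  Tendsto
    (fun ε : ℝ => c * ∫ y in {y : En n | ε ≤ dist x y},
        (w x - w y) / dist x y ^ ((n : ℝ) + σ))
    (nhdsWithin 0 (Ioi 0)) (nhds L)

/-- Reflection `x ↦ x^λ` about the hyperplane `T_λ = {x : x₁ = λ}`. -/
def reflPt (n : ℕ) [NeZero n] (l : ℝ) (x : En n) : En n :=
  WithLp.toLp 2 (fun i => if i = 0 then 2 * l - x 0 else x i)

/-- The half space `Σ_λ = {x : x₁ < λ}`. -/
def halfSpace (n : ℕ) [NeZero n] (l : ℝ) : Set (En n) := {x | x 0 < l}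

section AuxLemmas

variable {n : ℕ} [NeZero n] {l : ℝ}

set_option linter.unusedSectionVars false

lemma abs_coord_le_dist (x y : En n) (i : Fin n) : |x i - y i| ≤ dist x y := by
  rw [EuclideanSpace.dist_eq]
  have h1 : |x i - y i| = Real.sqrt (dist (x i) (y i) ^ 2) := by
    rw [Real.sqrt_sq_eq_abs, Real.dist_eq, abs_abs]
  rw [h1]
  apply Real.sqrt_le_sqrt
  exact Finset.single_le_sum (f := fun j => dist (x j) (y j) ^ 2)
    (fun j _ => sq_nonneg (dist (x j) (y j))) (Finset.mem_univ i)

lemma dist_of_eq_off0 (x y : En n) (h : ∀ i : Fin n, i ≠ 0 → x i = y i) :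
    dist x y = |x 0 - y 0| := by
  rw [EuclideanSpace.dist_eq]
  rw [Finset.sum_eq_single (0 : Fin n)]
  · rw [Real.dist_eq, Real.sqrt_sq_eq_abs, abs_abs]
  · intro i _ hi
    rw [Real.dist_eq, h i hi, sub_self, abs_zero]
    norm_num
  · intro h0; exact absurd (Finset.mem_univ _) h0

lemma reflPt_isometry (x y : En n) : dist (reflPt n l x) (reflPt n l y) = dist x y := by
  rw [EuclideanSpace.dist_eq, EuclideanSpace.dist_eq]
  congr 1
  apply Finset.sum_congr rfl
  intro i _
  by_cases hi : i = 0
  · subst hi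
    simp only [reflPt, eq_self_iff_true, if_true]
    rw [Real.dist_eq, Real.dist_eq,
      show 2*l - x 0 - (2*l - y 0) = -(x 0 - y 0) by ring, abs_neg]
  · simp only [reflPt]
    rw [if_neg hi, if_neg hi]

lemma reflPt_involutive (x : En n) : reflPt n l (reflPt n l x) = x := by
  ext i
  show (if i = 0 then 2*l - (if (0:Fin n) = 0 then 2*l - x 0 else x 0) else
    (if i = 0 then 2*l - x 0 else x i)) = x i
  by_cases hi : i = 0
  · rw [if_pos hi, if_pos rfl, hi]; ring
  · rw [if_neg hi, if_neg hi]

lemma reflPt_dist_ge (x z : En n) (hx : x 0 ≤ l) (hz : z 0 ≤ l) :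
    dist x z ≤ dist (reflPt n l x) z := by
  rw [EuclideanSpace.dist_eq, EuclideanSpace.dist_eq]
  apply Real.sqrt_le_sqrt
  apply Finset.sum_le_sum
  intro i _
  by_cases hi : i = 0
  · subst hi
    show dist (x 0) (z 0) ^ 2 ≤ dist (if (0:Fin n) = 0 then 2*l - x 0 else x 0) (z 0) ^ 2
    rw [if_pos rfl, Real.dist_eq, Real.dist_eq, sq_abs, sq_abs]
    nlinarith [mul_nonneg (sub_nonneg.2 hx) (sub_nonneg.2 hz)]
  · show dist (x i) (z i) ^ 2 ≤ dist (if i = 0 then 2*l - x 0 else x i) (z i) ^ 2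
    rw [if_neg hi]

lemma reflPt_measurePreserving :
    MeasurePreserving (reflPt n l) (volume : Measure (En n)) volume := by
  set w : En n := WithLp.toLp 2 (fun i => if i = (0:Fin n) then (2*l : ℝ) else 0) with hw
  have hM : reflPt n l = fun x : En n =>
      (w +
        (LinearIsometryEquiv.piLpCongrRight 2
          (fun i : Fin n => if i = 0 then (LinearIsometryEquiv.neg ℝ : ℝ ≃ₗᵢ[ℝ] ℝ)
            else LinearIsometryEquiv.refl ℝ ℝ)) x) := by
    funext x
    ext i
    show (if i = 0 then 2*l - x 0 else x i) = _
    by_cases hi : i = 0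
    · rw [if_pos hi]
      subst hi
      have : ((LinearIsometryEquiv.piLpCongrRight 2
          (fun i : Fin n => if i = 0 then (LinearIsometryEquiv.neg ℝ : ℝ ≃ₗᵢ[ℝ] ℝ)
            else LinearIsometryEquiv.refl ℝ ℝ)) x) 0 = -x 0 := by
        rw [LinearIsometryEquiv.piLpCongrRight_apply]
        simp
      show _ = w 0 + _
      rw [hw]
      show _ = (if (0:Fin n) = 0 then (2*l:ℝ) else 0) + _
      rw [if_pos rfl]; exact (sub_eq_add_neg _ _).trans (congrArg _ this.symm)
    · rw [if_neg hi]
      have : ((LinearIsometryEquiv.piLpCongrRight 2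
          (fun i : Fin n => if i = 0 then (LinearIsometryEquiv.neg ℝ : ℝ ≃ₗᵢ[ℝ] ℝ)
            else LinearIsometryEquiv.refl ℝ ℝ)) x) i = x i := by
        rw [LinearIsometryEquiv.piLpCongrRight_apply]
        simp [hi]
      show _ = w i + _
      rw [hw]
      show _ = (if i = 0 then (2*l:ℝ) else 0) + _
      rw [if_neg hi, zero_add]; exact this.symm
  rw [hM]
  exact (measurePreserving_add_left volume _).comp
    (LinearIsometryEquiv.piLpCongrRight 2
      (fun i : Fin n => if i = 0 then (LinearIsometryEquiv.neg ℝ : ℝ ≃ₗᵢ[ℝ] ℝ)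
        else LinearIsometryEquiv.refl ℝ ℝ)).measurePreserving

lemma reflPt_continuous : Continuous (reflPt n l) := by
  have h1 : Isometry (reflPt n l) := by
    intro x y
    rw [edist_dist, edist_dist, reflPt_isometry]
  exact h1.continuous

lemma reflPt_measurableEmbedding : MeasurableEmbedding (reflPt n l) := by
  exact (Homeomorph.mk ⟨reflPt n l, reflPt n l, reflPt_involutive, reflPt_involutive⟩
    (reflPt_continuous (l := l)) (reflPt_continuous (l := l))).measurableEmbedding

lemma cont_eval0 : Continuous fun x : En n => x 0 :=
  (continuous_apply (0 : Fin n)).comp (PiLp.continuous_ofLp 2 _)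

lemma halfSpace_isOpen : IsOpen (halfSpace n l) :=
  isOpen_lt cont_eval0 continuous_const

lemma hyperplane_null : volume {z : En n | z 0 = l} = 0 := by
  have hmp := EuclideanSpace.volume_preserving_symm_measurableEquiv_toLp (Fin n)
  have hset : {z : En n | z 0 = l} =
      (MeasurableEquiv.toLp 2 (Fin n → ℝ)).symm ⁻¹' {x : Fin n → ℝ | x 0 = l} := rfl
  rw [hset, hmp.measure_preimage]
  · have : {x : Fin n → ℝ | x 0 = l} =
        Set.pi univ (fun i : Fin n => if i = 0 then {l} else univ) := by
      ext x
      simp only [mem_setOf_eq, Set.mem_pi, mem_univ, forall_true_left]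
      constructor
      · intro h i
        by_cases hi : i = 0
        · subst hi; simp [h]
        · simp [hi]
      · intro h
        have := h 0
        simpa using this
    rw [this, volume_pi_pi]
    apply Finset.prod_eq_zero (Finset.mem_univ (0 : Fin n))
    simp
  · apply MeasurableSet.nullMeasurableSet
    exact measurableSet_eq_fun (measurable_pi_apply 0) measurable_const
lemma add_rpow_le {t a b : ℝ} (ht : 0 ≤ t) (ha : 0 ≤ a) (hb : 0 ≤ b) :
    (a + b) ^ t ≤ 2 ^ t * (a ^ t + b ^ t) := by
  rcases le_total a b with h | h
  · have h1 : (a + b) ^ t ≤ (2 * b) ^ t := by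
      apply Real.rpow_le_rpow (by linarith) (by linarith) ht
    rw [Real.mul_rpow (by norm_num) hb] at h1
    have h2 : (0:ℝ) ≤ 2 ^ t := Real.rpow_nonneg (by norm_num) t
    nlinarith [Real.rpow_nonneg ha t]
  · have h1 : (a + b) ^ t ≤ (2 * a) ^ t := by
      apply Real.rpow_le_rpow (by linarith) (by linarith) ht
    rw [Real.mul_rpow (by norm_num) ha] at h1
    have h2 : (0:ℝ) ≤ 2 ^ t := Real.rpow_nonneg (by norm_num) t
    nlinarith [Real.rpow_nonneg hb t]

lemma integrable_inv_one_add_rpow {t : ℝ} (ht : (n:ℝ) < t) :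
    Integrable (fun z : En n => (1 + ‖z‖ ^ t)⁻¹) volume := by
  have ht' : 0 < t := lt_of_le_of_lt (Nat.cast_nonneg n) ht
  have hfin : (Module.finrank ℝ (En n) : ℝ) < t := by
    rwa [finrank_euclideanSpace_fin]
  have hbase := integrable_one_add_norm (E := En n) (μ := volume) hfin
  refine (hbase.const_mul ((2:ℝ) ^ t)).mono' ?_ (Eventually.of_forall fun z => ?_)
  · apply Continuous.aestronglyMeasurable
    apply Continuous.inv₀
    · exact continuous_const.add (continuous_norm.rpow_const fun z => Or.inr ht'.le)
    · intro z; positivity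
  · have hz : (0:ℝ) ≤ ‖z‖ := norm_nonneg z
    have h1 : (1 + ‖z‖) ^ t ≤ 2 ^ t * (1 + ‖z‖ ^ t) := by
      have := add_rpow_le (a := 1) (b := ‖z‖) ht'.le (by norm_num) hz
      rwa [Real.one_rpow] at this
    have hA : (0:ℝ) < (1 + ‖z‖) ^ t := Real.rpow_pos_of_pos (by linarith) t
    have hB : (0:ℝ) < 1 + ‖z‖ ^ t := by positivity
    rw [Real.norm_eq_abs, abs_of_pos (by positivity : (0:ℝ) < (1 + ‖z‖ ^ t)⁻¹),
      Real.rpow_neg (by linarith : (0:ℝ) ≤ 1 + ‖z‖), ← one_div, ← one_div,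
      mul_one_div, div_le_div_iff₀ hB hA]
    linarith

lemma kernel_bound {t d : ℝ} (ht : 0 < t) (hd : 0 < d) (p z : En n)
    (hz : d ≤ dist p z) :
    (dist p z ^ t)⁻¹ ≤ ((1 + 2 ^ t * ‖p‖ ^ t) / d ^ t + 2 ^ t) * (1 + ‖z‖ ^ t)⁻¹ := by
  set D := dist p z with hD
  have hDpos : 0 < D := lt_of_lt_of_le hd hz
  have hDt : 0 < D ^ t := Real.rpow_pos_of_pos hDpos t
  have hdt : 0 < d ^ t := Real.rpow_pos_of_pos hd t
  have h2t : (0:ℝ) < 2 ^ t := Real.rpow_pos_of_pos (by norm_num) t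
  have hpt : (0:ℝ) ≤ ‖p‖ ^ t := Real.rpow_nonneg (norm_nonneg p) t
  have hzn : ‖z‖ ≤ ‖p‖ + D := by
    have h1 : ‖z‖ ≤ ‖z - p‖ + ‖p‖ := by
      simpa using norm_add_le (z - p) p
    have h2 : ‖z - p‖ = D := by rw [hD, dist_comm, dist_eq_norm]
    linarith
  have h1 : ‖z‖ ^ t ≤ 2 ^ t * (‖p‖ ^ t + D ^ t) := by
    calc ‖z‖ ^ t ≤ (‖p‖ + D) ^ t :=
      Real.rpow_le_rpow (norm_nonneg z) hzn ht.le
    _ ≤ _ := add_rpow_le ht.le (norm_nonneg p) hDpos.le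
  have h2 : 1 ≤ D ^ t / d ^ t := by
    rw [← Real.div_rpow hDpos.le hd.le]
    calc (1:ℝ) = 1 ^ t := (Real.one_rpow t).symm
    _ ≤ (D / d) ^ t := Real.rpow_le_rpow (by norm_num) ((one_le_div hd).mpr hz) ht.le
  have hmain : 1 + ‖z‖ ^ t ≤ ((1 + 2 ^ t * ‖p‖ ^ t) / d ^ t + 2 ^ t) * D ^ t := by
    have h3 : 2 ^ t * ‖p‖ ^ t ≤ 2 ^ t * ‖p‖ ^ t * (D ^ t / d ^ t) := by
      nlinarith [mul_nonneg h2t.le hpt]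
    have hexp : ((1 + 2 ^ t * ‖p‖ ^ t) / d ^ t + 2 ^ t) * D ^ t
        = D ^ t / d ^ t + 2 ^ t * ‖p‖ ^ t * (D ^ t / d ^ t) + 2 ^ t * D ^ t := by
      field_simp
    rw [hexp]
    nlinarith
  have hB : (0:ℝ) < 1 + ‖z‖ ^ t := by positivity
  rw [← one_div, ← one_div, mul_one_div, div_le_div_iff₀ hDt hB]
  linarith

lemma key_int (V : En n → ℝ) (hm : AEStronglyMeasurable V (volume : Measure (En n)))
    {t : ℝ} (ht : (n:ℝ) < t)
    (hInt : Integrable (fun z : En n => |V z| / (1 + ‖z‖ ^ t)) volume)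
    (p : En n) {d : ℝ} (hd : 0 < d) {S : Set (En n)} (hS : MeasurableSet S)
    (hdist : ∀ z ∈ S, d ≤ dist p z) (a b : ℝ) :
    IntegrableOn (fun z => (a + b * V z) / dist p z ^ t) S volume := by
  have ht' : 0 < t := lt_of_le_of_lt (Nat.cast_nonneg n) ht
  set C : ℝ := (1 + 2 ^ t * ‖p‖ ^ t) / d ^ t + 2 ^ t with hC
  have hCpos : 0 < C := by
    have h2t : (0:ℝ) < 2 ^ t := Real.rpow_pos_of_pos (by norm_num) t
    have hpt : (0:ℝ) ≤ ‖p‖ ^ t := Real.rpow_nonneg (norm_nonneg p) t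
    have hdt : 0 < d ^ t := Real.rpow_pos_of_pos hd t
    positivity
  have hg : Integrable (fun z : En n =>
      (|a| * C) * (1 + ‖z‖ ^ t)⁻¹ + (|b| * C) * (|V z| / (1 + ‖z‖ ^ t))) volume := by
    exact ((integrable_inv_one_add_rpow ht).const_mul _).add (hInt.const_mul _)
  have hker : Continuous fun z : En n => dist p z ^ t := by
    apply Continuous.rpow_const (continuous_const.dist continuous_id)
    exact fun z => Or.inr ht'.le
  have hmeas : AEStronglyMeasurable (fun z : En n => (a + b * V z) / dist p z ^ t)
      (volume.restrict S) := by
    simp only [div_eq_mul_inv]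
    exact ((aestronglyMeasurable_const.add (hm.const_mul b)).mul
      hker.measurable.inv.aestronglyMeasurable).restrict
  refine (hg.integrableOn).mono' hmeas ?_
  rw [ae_restrict_iff' hS]
  refine Eventually.of_forall fun z hzS => ?_
  have hdz := hdist z hzS
  have hDpos : 0 < dist p z := lt_of_lt_of_le hd hdz
  have hDt : 0 < dist p z ^ t := Real.rpow_pos_of_pos hDpos t
  have hBinv : (0:ℝ) ≤ (1 + ‖z‖ ^ t)⁻¹ := by positivity
  have h1 : |a + b * V z| ≤ |a| + |b| * |V z| := by
    calc |a + b * V z| ≤ |a| + |b * V z| := abs_add_le a (b * V z)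
    _ = |a| + |b| * |V z| := by rw [abs_mul]
  have h2 := kernel_bound (n := n) ht' hd p z hdz
  rw [Real.norm_eq_abs, abs_div, abs_of_pos hDt, div_eq_mul_inv]
  calc |a + b * V z| * (dist p z ^ t)⁻¹
      ≤ (|a| + |b| * |V z|) * (C * (1 + ‖z‖ ^ t)⁻¹) := by
        apply mul_le_mul h1 h2 (by positivity) (by positivity)
  _ = (|a| * C) * (1 + ‖z‖ ^ t)⁻¹ + (|b| * C) * (|V z| / (1 + ‖z‖ ^ t)) := by
        ring
lemma norm_coord_le (x : En n) (i : Fin n) : |x i| ≤ ‖x‖ := by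
  have := abs_coord_le_dist x 0 i
  rw [dist_zero_right] at this
  simpa using this

lemma J_lower (β lam : ℝ) (hβ0 : 0 < β) (x1 : En n) (hx1 : x1 ∈ halfSpace n lam)
    (hr1 : 1 ≤ ‖x1‖) (hrl : |lam| ≤ ‖x1‖)
    (hint : IntegrableOn (fun z => (dist (reflPt n lam x1) z ^ ((n:ℝ)+β))⁻¹)
      (halfSpace n lam) volume) :
    (volume (ball (0:En n) 1)).toReal * ((5:ℝ) ^ ((n:ℝ)+β))⁻¹ * ‖x1‖ ^ (-β)
      ≤ ∫ z in halfSpace n lam, (dist (reflPt n lam x1) z ^ ((n:ℝ)+β))⁻¹ := by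
  set t : ℝ := (n:ℝ) + β with htdef
  have ht' : 0 < t := by positivity
  set r : ℝ := ‖x1‖ with hrdef
  have hr0 : 0 < r := lt_of_lt_of_le one_pos hr1
  set Rx : En n := reflPt n lam x1 with hRxdef
  set q : En n := WithLp.toLp 2 (fun i => if i = 0 then lam - 2*r else x1 i) with hqdef
  have hq0 : q 0 = lam - 2*r := by rw [hqdef]; simp
  have hRx0 : Rx 0 = 2 * lam - x1 0 := by
    rw [hRxdef]
    show (if (0:Fin n) = 0 then 2 * lam - x1 0 else x1 0) = _
    rw [if_pos rfl]
  have hball_sub : ball q r ⊆ halfSpace n lam := by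
    intro z hz
    rw [mem_ball] at hz
    have h1 := abs_coord_le_dist z q 0
    have h2 : z 0 - q 0 ≤ |z 0 - q 0| := le_abs_self _
    show z 0 < lam
    rw [hq0] at h1 h2
    have : z 0 - (lam - 2*r) < r := lt_of_le_of_lt (h2.trans h1) hz
    linarith
  have hx10 : |x1 0| ≤ r := norm_coord_le x1 0
  have hdistq : dist Rx q = (lam - x1 0) + 2*r := by
    rw [dist_of_eq_off0 Rx q]
    · rw [hRx0, hq0]
      rw [abs_of_pos]
      · ring
      · have : x1 0 < lam := hx1
        linarith
    · intro i hi
      rw [hRxdef, hqdef]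
      show (if i = 0 then 2*lam - x1 0 else x1 i) = (if i = 0 then lam - 2*r else x1 i)
      rw [if_neg hi, if_neg hi]
  have hfar : ∀ z ∈ ball q r, dist Rx z ≤ 5 * r := by
    intro z hz
    rw [mem_ball] at hz
    have h1 : dist Rx z ≤ dist Rx q + dist q z := dist_triangle _ _ _
    have h2 : dist q z < r := by rwa [dist_comm]
    have h3 : lam - x1 0 ≤ 2 * r := by
      have h4 : lam ≤ |lam| := le_abs_self lam
      have h5 : -x1 0 ≤ |x1 0| := neg_le_abs _
      linarith
    rw [hdistq] at h1
    linarith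
  have hconst_le : ∀ z ∈ ball q r, ((5*r) ^ t)⁻¹ ≤ (dist Rx z ^ t)⁻¹ := by
    intro z hz
    have hz0 : z 0 < lam := hball_sub hz
    have hx10lt : x1 0 < lam := hx1
    have hdz : 0 < dist Rx z := by
      have h1 := abs_coord_le_dist Rx z 0
      have h2 : Rx 0 - z 0 ≤ |Rx 0 - z 0| := le_abs_self _
      rw [hRx0] at h1 h2
      linarith
    apply inv_anti₀ (Real.rpow_pos_of_pos hdz t)
    exact Real.rpow_le_rpow dist_nonneg (hfar z hz) ht'.le
  have step1 : (∫ z in ball q r, (dist Rx z ^ t)⁻¹)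
      ≤ ∫ z in halfSpace n lam, (dist Rx z ^ t)⁻¹ := by
    refine setIntegral_mono_set hint ?_ (HasSubset.Subset.eventuallyLE hball_sub)
    exact Eventually.of_forall fun z => by positivity
  have step2 : (volume (ball q r)).toReal * ((5*r) ^ t)⁻¹
      ≤ ∫ z in ball q r, (dist Rx z ^ t)⁻¹ := by
    have hc := setIntegral_const (μ := volume) (s := ball q r) (((5*r) ^ t)⁻¹)
    rw [smul_eq_mul, measureReal_def] at hc
    rw [← hc]
    refine setIntegral_mono_on ?_ (hint.mono_set hball_sub) measurableSet_ball hconst_le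
    exact integrableOn_const measure_ball_lt_top.ne
  have hvol : (volume (ball q r)).toReal
      = r ^ (n:ℕ) * (volume (ball (0:En n) 1)).toReal := by
    rw [Measure.addHaar_ball volume q hr0.le, finrank_euclideanSpace_fin,
      ENNReal.toReal_mul, ENNReal.toReal_ofReal (by positivity)]
  have harith : (volume (ball (0:En n) 1)).toReal * ((5:ℝ) ^ t)⁻¹ * r ^ (-β)
      = (volume (ball q r)).toReal * ((5*r) ^ t)⁻¹ := by
    rw [hvol]
    rw [Real.mul_rpow (by norm_num) hr0.le]
    rw [mul_inv]
    have h1 : (r:ℝ) ^ (n:ℕ) = r ^ ((n:ℝ)) := (Real.rpow_natCast r n).symm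
    rw [h1]
    have h2 : r ^ ((n:ℝ)) * (r ^ t)⁻¹ = r ^ (-β) := by
      rw [← Real.rpow_neg hr0.le, ← Real.rpow_add hr0, htdef]
      ring_nf
    calc (volume (ball (0:En n) 1)).toReal * ((5:ℝ) ^ t)⁻¹ * r ^ (-β)
        = (volume (ball (0:En n) 1)).toReal * ((5:ℝ) ^ t)⁻¹ * (r ^ ((n:ℝ)) * (r ^ t)⁻¹) := by
          rw [h2]
    _ = r ^ ((n:ℝ)) * (volume (ball (0:En n) 1)).toReal * (((5:ℝ) ^ t)⁻¹ * (r ^ t)⁻¹) := by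
          ring
  rw [harith]
  exact le_trans step2 step1

lemma frac_lap_bound
    (β cβ : ℝ) (hβ0 : 0 < β) (hcβ : 0 < cβ) (lam : ℝ)
    (V : En n → ℝ) (hVmeas : AEStronglyMeasurable V (volume : Measure (En n)))
    (hVInt : Integrable (fun z : En n => |V z| / (1 + ‖z‖ ^ ((n:ℝ) + β))) volume)
    (hV_anti : ∀ x, V (reflPt n lam x) = -V x)
    (x1 : En n) (hx1 : x1 ∈ halfSpace n lam)
    (hVmin : ∀ z ∈ halfSpace n lam, V x1 ≤ V z)
    (L : ℝ) (hL : HasFracLap n β cβ V x1 L) :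
    L ≤ 2 * cβ * V x1 *
      ∫ z in halfSpace n lam, (dist (reflPt n lam x1) z ^ ((n:ℝ) + β))⁻¹ := by
  set t : ℝ := (n:ℝ) + β with htdef
  have ht : (n:ℝ) < t := by rw [htdef]; linarith
  have ht' : 0 < t := lt_of_le_of_lt (Nat.cast_nonneg n) ht
  set Rx : En n := reflPt n lam x1 with hRxdef
  set d : ℝ := lam - x1 0 with hddef
  have hd : 0 < d := sub_pos.2 hx1
  have hHSm : MeasurableSet (halfSpace n lam) := halfSpace_isOpen.measurableSet
  have hRx0 : Rx 0 = 2 * lam - x1 0 := by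
    rw [hRxdef]
    show (if (0:Fin n) = 0 then 2 * lam - x1 0 else x1 0) = _
    rw [if_pos rfl]
  have hdistRL : ∀ z : En n, z 0 ≤ lam → d ≤ dist Rx z := by
    intro z hz
    have h1 := abs_coord_le_dist Rx z 0
    have h2 : d ≤ Rx 0 - z 0 := by rw [hRx0]; rw [hddef]; linarith
    have h3 : Rx 0 - z 0 ≤ |Rx 0 - z 0| := le_abs_self _
    linarith
  -- the three integrands
  set g1 : En n → ℝ := fun y => (V x1 - V y) / dist x1 y ^ t with hg1def
  set g2 : En n → ℝ := fun z => (V x1 - V z) / dist Rx z ^ t with hg2def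
  set g3 : En n → ℝ := fun z => (V x1 + V z) / dist Rx z ^ t with hg3def
  set J : ℝ := ∫ z in halfSpace n lam, (dist Rx z ^ t)⁻¹ with hJdef
  have hdistHS : ∀ z ∈ halfSpace n lam, d ≤ dist Rx z := fun z hz => hdistRL z (le_of_lt hz)
  have hg2int : IntegrableOn g2 (halfSpace n lam) volume := by
    refine (key_int V hVmeas ht hVInt Rx hd hHSm hdistHS (V x1) (-1)).congr ?_
    exact Eventually.of_forall fun z => by rw [hg2def]; ring
  have hg3int : IntegrableOn g3 (halfSpace n lam) volume := by
    refine (key_int V hVmeas ht hVInt Rx hd hHSm hdistHS (V x1) 1).congr ?_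
    exact Eventually.of_forall fun z => by rw [hg3def]; ring
  have hg4int : IntegrableOn (fun z => (dist Rx z ^ t)⁻¹) (halfSpace n lam) volume := by
    refine (key_int V hVmeas ht hVInt Rx hd hHSm hdistHS 1 0).congr ?_
    exact Eventually.of_forall fun z => by simp
  have hg2abs : IntegrableOn (fun z => |g2 z|) (halfSpace n lam) volume := hg2int.abs
  -- the A + B = 2 V x1 J identity
  have hAB : (∫ z in halfSpace n lam, g2 z) + (∫ z in halfSpace n lam, g3 z)
      = 2 * V x1 * J := by
    rw [← integral_add hg2int hg3int]
    have : ∀ z : En n, g2 z + g3 z = (2 * V x1) * (dist Rx z ^ t)⁻¹ := by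
      intro z; rw [hg2def, hg3def]; ring
    rw [integral_congr_ae (Eventually.of_forall this), integral_const_mul, hJdef]
  -- main step: for every positive δ', L ≤ 2 cβ V x1 J + cβ δ'
  have key : ∀ δ' > (0:ℝ), L ≤ 2 * cβ * V x1 * J + cβ * δ' := by
    intro δ' hδ'
    -- find a good small radius ε₀
    obtain ⟨k₀, hk₀⟩ : ∃ k₀ : ℕ, (∫ z in halfSpace n lam ∩ ball x1 (1/(k₀+1)), |g2 z|) < δ' := by
      have hsm : ∀ k : ℕ, MeasurableSet (halfSpace n lam ∩ ball x1 (1/(k+1:ℝ))) :=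
        fun k => hHSm.inter measurableSet_ball
      have hanti : Antitone fun k : ℕ => halfSpace n lam ∩ ball x1 (1/(k+1:ℝ)) := by
        intro k1 k2 hk
        apply inter_subset_inter_right
        apply ball_subset_ball
        apply one_div_le_one_div_of_le (by positivity)
        have : (k1:ℝ) ≤ k2 := Nat.cast_le.2 hk
        linarith
      have htend := tendsto_setIntegral_of_antitone (f := fun z => |g2 z|) (μ := volume)
        hsm hanti ⟨0, hg2abs.mono_set inter_subset_left⟩
      have hiInter : (⋂ k : ℕ, halfSpace n lam ∩ ball x1 (1/(k+1:ℝ))) ⊆ {x1} := by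
        intro z hz
        simp only [mem_iInter, mem_inter_iff, mem_ball] at hz
        have hz0 : dist z x1 = 0 := by
          by_contra hne
          have hpos : 0 < dist z x1 := lt_of_le_of_ne dist_nonneg (Ne.symm hne)
          obtain ⟨k, hk⟩ := exists_nat_one_div_lt hpos
          exact absurd (hz k).2 (not_lt.2 hk.le)
        simp [dist_eq_zero.1 hz0]
      have hzero : (∫ z in ⋂ k : ℕ, halfSpace n lam ∩ ball x1 (1/(k+1:ℝ)), |g2 z|) = 0 := by
        have : volume (⋂ k : ℕ, halfSpace n lam ∩ ball x1 (1/(k+1:ℝ))) = 0 :=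
          measure_mono_null hiInter (measure_singleton x1)
        rw [Measure.restrict_eq_zero.2 this, integral_zero_measure]
      rw [hzero] at htend
      exact (htend.eventually (eventually_lt_nhds hδ')).exists
    set ε₀ : ℝ := 1/(k₀+1:ℝ) with hε₀def
    have hε₀ : 0 < ε₀ := by positivity
    -- eventual bound
    have hev : ∀ᶠ ε in nhdsWithin (0:ℝ) (Ioi 0),
        cβ * (∫ y in {y : En n | ε ≤ dist x1 y}, (V x1 - V y) / dist x1 y ^ t)
          ≤ 2 * cβ * V x1 * J + cβ * δ' := by
      filter_upwards [Ioo_mem_nhdsGT (lt_min hd hε₀)] with ε hε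
      obtain ⟨hε0, hεlt⟩ := hε
      have hεd : ε < d := lt_of_lt_of_le hεlt (min_le_left _ _)
      have hεε₀ : ε ≤ ε₀ := le_of_lt (lt_of_lt_of_le hεlt (min_le_right _ _))
      set Dε : Set (En n) := {y | ε ≤ dist x1 y} with hDεdef
      have hDεm : MeasurableSet Dε := by
        apply IsClosed.measurableSet
        exact isClosed_le continuous_const (continuous_const.dist continuous_id)
      have hg1int : IntegrableOn g1 Dε volume := by
        refine (key_int V hVmeas ht hVInt x1 hε0 hDεm (fun z hz => hz) (V x1) (-1)).congr ?_
        exact Eventually.of_forall fun z => by rw [hg1def]; ring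
      -- change of variables on the complement part
      have hcov : (∫ y in Dε ∩ (halfSpace n lam)ᶜ, g1 y) = ∫ z in halfSpace n lam, g3 z := by
        have hpre : reflPt n lam ⁻¹' (Dε ∩ (halfSpace n lam)ᶜ) = {z : En n | z 0 ≤ lam} := by
          ext z
          simp only [mem_preimage, mem_inter_iff, mem_compl_iff, hDεdef, mem_setOf_eq,
            halfSpace, not_lt]
          have hrz0 : (reflPt n lam z) 0 = 2 * lam - z 0 := by
            show (if (0:Fin n) = 0 then 2 * lam - z 0 else z 0) = _
            rw [if_pos rfl]
          have hdist_eq : dist x1 (reflPt n lam z) = dist Rx z := by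
            rw [hRxdef]
            calc dist x1 (reflPt n lam z)
                = dist (reflPt n lam x1) (reflPt n lam (reflPt n lam z)) :=
                  (reflPt_isometry _ _).symm
            _ = dist (reflPt n lam x1) z := by rw [reflPt_involutive]
          constructor
          · rintro ⟨-, h2⟩
            rw [hrz0] at h2; linarith
          · intro hz
            refine ⟨?_, by rw [hrz0]; linarith⟩
            rw [hdist_eq]
            exact le_of_lt (lt_of_lt_of_le hεd (hdistRL z hz))
        have hcv := (reflPt_measurePreserving (n := n) (l := lam)).setIntegral_preimage_emb
          (reflPt_measurableEmbedding (n := n) (l := lam)) g1 (Dε ∩ (halfSpace n lam)ᶜ)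
        rw [hpre] at hcv
        have hcomp : ∀ z : En n, g1 (reflPt n lam z) = g3 z := by
          intro z
          rw [hg1def, hg3def]
          have hdist_eq : dist x1 (reflPt n lam z) = dist Rx z := by
            rw [hRxdef]
            calc dist x1 (reflPt n lam z)
                = dist (reflPt n lam x1) (reflPt n lam (reflPt n lam z)) :=
                  (reflPt_isometry _ _).symm
            _ = dist (reflPt n lam x1) z := by rw [reflPt_involutive]
          simp only [hV_anti z, hdist_eq]
          ring
        rw [show (fun z => g1 (reflPt n lam z)) = g3 from funext hcomp] at hcv
        rw [← hcv]
        apply setIntegral_congr_set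
        have h1 : ({z : En n | z 0 ≤ lam} \ halfSpace n lam) ⊆ {z : En n | z 0 = lam} := by
          intro z hz
          simp only [mem_diff, mem_setOf_eq, halfSpace, not_lt] at hz
          exact le_antisymm hz.1 hz.2
        have h2 : (halfSpace n lam \ {z : En n | z 0 ≤ lam}) = ∅ := by
          apply eq_empty_of_subset_empty
          intro z hz
          simp only [mem_diff, mem_setOf_eq, halfSpace, not_le] at hz
          exact absurd hz.1 (not_lt.2 (le_of_lt hz.2))
        rw [ae_eq_set]
        constructor
        · exact measure_mono_null h1 hyperplane_null
        · rw [h2]; exact measure_empty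
      -- splitting of the full integral
      have hsplit : (∫ y in Dε, g1 y)
          = (∫ y in Dε ∩ halfSpace n lam, g1 y) + ∫ y in Dε ∩ (halfSpace n lam)ᶜ, g1 y := by
        have hset : Dε = (Dε ∩ halfSpace n lam) ∪ (Dε ∩ (halfSpace n lam)ᶜ) := by
          rw [← inter_union_distrib_left, union_compl_self, inter_univ]
        conv_lhs => rw [hset]
        refine setIntegral_union ?_ (hDεm.inter hHSm.compl) ?_ ?_
        · exact (disjoint_compl_right.mono inter_subset_right inter_subset_right)
        · exact hg1int.mono_set inter_subset_left
        · exact hg1int.mono_set inter_subset_left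
      -- monotone comparison on Dε ∩ Σ
      have hmono : (∫ y in Dε ∩ halfSpace n lam, g1 y) ≤ ∫ y in Dε ∩ halfSpace n lam, g2 y := by
        refine setIntegral_mono_on (hg1int.mono_set inter_subset_left)
          (hg2int.mono_set inter_subset_right) (hDεm.inter hHSm) ?_
        intro z hz
        obtain ⟨hzD, hzHS⟩ := hz
        have hnum : V x1 - V z ≤ 0 := sub_nonpos.2 (hVmin z hzHS)
        have hdle : dist x1 z ≤ dist Rx z := by
          rw [hRxdef]
          exact reflPt_dist_ge x1 z (le_of_lt hx1) (le_of_lt hzHS)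
        have hdpos : 0 < dist x1 z := lt_of_lt_of_le hε0 hzD
        have hPpos : 0 < dist x1 z ^ t := Real.rpow_pos_of_pos hdpos t
        have hQpos : 0 < dist Rx z ^ t := Real.rpow_pos_of_pos (lt_of_lt_of_le hdpos hdle) t
        have hPQ : dist x1 z ^ t ≤ dist Rx z ^ t :=
          Real.rpow_le_rpow dist_nonneg hdle ht'.le
        rw [hg1def, hg2def]
        show (V x1 - V z) / dist x1 z ^ t ≤ (V x1 - V z) / dist Rx z ^ t
        rw [div_eq_mul_inv, div_eq_mul_inv]
        exact mul_le_mul_of_nonpos_left (inv_anti₀ hPpos hPQ) hnum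
      -- splitting Σ into the part close to x1 and the rest
      have hsplitA : (∫ z in halfSpace n lam, g2 z)
          = (∫ z in Dε ∩ halfSpace n lam, g2 z)
            + ∫ z in halfSpace n lam ∩ ball x1 ε, g2 z := by
        have hset : halfSpace n lam = (Dε ∩ halfSpace n lam) ∪ (halfSpace n lam ∩ ball x1 ε) := by
          ext y
          simp only [mem_union, mem_inter_iff, hDεdef, mem_setOf_eq, mem_ball]
          constructor
          · intro hy
            rcases le_or_gt ε (dist x1 y) with h | h
            · exact Or.inl ⟨h, hy⟩
            · exact Or.inr ⟨hy, by rwa [dist_comm]⟩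
          · rintro (⟨-, h⟩ | ⟨h, -⟩) <;> exact h
        conv_lhs => rw [hset]
        refine setIntegral_union ?_ (hHSm.inter measurableSet_ball) ?_ ?_
        · rw [disjoint_left]
          rintro z ⟨hz1, -⟩ ⟨-, hz2⟩
          rw [mem_ball, dist_comm] at hz2
          exact absurd hz1 (not_le.2 hz2)
        · exact hg2int.mono_set inter_subset_right
        · exact hg2int.mono_set inter_subset_left
      -- the near part is small
      have hnear : -(∫ z in halfSpace n lam ∩ ball x1 ε, g2 z) < δ' := by
        have h1 : |∫ z in halfSpace n lam ∩ ball x1 ε, g2 z|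
            ≤ ∫ z in halfSpace n lam ∩ ball x1 ε, |g2 z| := by
          have := norm_integral_le_integral_norm (μ := volume.restrict (halfSpace n lam ∩ ball x1 ε)) g2
          simpa [Real.norm_eq_abs] using this
        have h2 : (∫ z in halfSpace n lam ∩ ball x1 ε, |g2 z|)
            ≤ ∫ z in halfSpace n lam ∩ ball x1 (1/(k₀+1:ℝ)), |g2 z| := by
          refine setIntegral_mono_set (hg2abs.mono_set inter_subset_left) ?_ ?_
          · exact Eventually.of_forall fun z => abs_nonneg _
          · refine HasSubset.Subset.eventuallyLE ?_
            exact inter_subset_inter_right _ (ball_subset_ball hεε₀)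
        have h3 := neg_le_abs (∫ z in halfSpace n lam ∩ ball x1 ε, g2 z)
        calc -(∫ z in halfSpace n lam ∩ ball x1 ε, g2 z) ≤ _ := h3
        _ ≤ _ := h1
        _ ≤ _ := h2
        _ < δ' := hk₀
      -- put everything together
      have hfinal : (∫ y in Dε, g1 y) ≤ 2 * V x1 * J + δ' := by
        have e1 : (∫ y in Dε ∩ halfSpace n lam, g2 y)
            = (∫ z in halfSpace n lam, g2 z) - ∫ z in halfSpace n lam ∩ ball x1 ε, g2 z := by
          rw [hsplitA]; ring
        rw [hsplit, hcov]
        have := hmono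
        rw [e1] at this
        have h4 : (∫ z in halfSpace n lam, g2 z) + (∫ z in halfSpace n lam, g3 z)
            = 2 * V x1 * J := hAB
        linarith
      calc cβ * (∫ y in {y : En n | ε ≤ dist x1 y}, (V x1 - V y) / dist x1 y ^ t)
          = cβ * ∫ y in Dε, g1 y := by rw [hDεdef, hg1def]
      _ ≤ cβ * (2 * V x1 * J + δ') := mul_le_mul_of_nonneg_left hfinal hcβ.le
      _ = 2 * cβ * V x1 * J + cβ * δ' := by ring
    exact le_of_tendsto hL hev
  -- conclude
  by_contra hcon
  push_neg at hcon
  have hδ' : 0 < (L - 2 * cβ * V x1 * J) / (2 * cβ) := by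
    apply div_pos (by linarith) (by linarith)
  have := key _ hδ'
  have h2 : cβ * ((L - 2 * cβ * V x1 * J) / (2 * cβ)) = (L - 2 * cβ * V x1 * J) / 2 := by
    field_simp
  rw [h2] at this
  linarith
end AuxLemmas

/-- Theorem 1.2: decay at infinity. -/
theorem statement1
    (n : ℕ) [NeZero n] (hn : 2 ≤ n)
    (α β : ℝ) (hα : 0 < α ∧ α < 2) (hβ : 0 < β ∧ β < 2)
    (lam : ℝ) (cα cβ : ℝ) (hcα : 0 < cα) (hcβ : 0 < cβ)
    (Ω : Set (En n)) (hΩopen : IsOpen Ω) (hΩsub : Ω ⊆ halfSpace n lam)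
    (hΩunb : ¬ IsBounded Ω)
    (U V : En n → ℝ)
    (hU_L : MemL n α U) (hU_reg : C11locOn n Ω U)
    (hV_L : MemL n β V) (hV_reg : C11locOn n Ω V)
    (hU_lsc : LowerSemicontinuousOn U (closure Ω))
    (hV_lsc : LowerSemicontinuousOn V (closure Ω))
    (hU_anti : ∀ x, U (reflPt n lam x) = -U x)
    (hV_anti : ∀ x, V (reflPt n lam x) = -V x)
    (C₁ C₂ C₃ : En n → ℝ)
    (hineq_U : ∀ x ∈ Ω, ∃ L, HasFracLap n α cα U x L ∧
      0 ≤ L + C₂ x * U x + C₃ x * V x)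
    (hineq_V : ∀ x ∈ Ω, ∃ L, HasFracLap n β cβ V x L ∧ 0 ≤ L + C₁ x * U x)
    (hext : ∀ x ∈ halfSpace n lam \ Ω, 0 ≤ U x ∧ 0 ≤ V x)
    (hsign : ∀ x ∈ Ω, C₁ x < 0 ∧ C₃ x < 0 ∧ 0 < C₂ x)
    (m c c' R₁ : ℝ) (hm : β < m) (hc : 0 < c) (hc' : 0 < c')
    (hC₁decay : ∀ x : En n, R₁ ≤ ‖x‖ →
      c / ‖x‖ ^ m ≤ -C₁ x ∧ -C₁ x ≤ c' / ‖x‖ ^ m)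
    (hC₃lim : Tendsto C₃ (comap (fun x : En n => ‖x‖) atTop) (nhds 0)) :
    ∃ R₀ > 0, ∀ x0 ∈ Ω, ∀ x1 ∈ Ω,
      (∀ x ∈ Ω, U x0 ≤ U x) → U x0 < 0 →
      (∀ x ∈ Ω, V x1 ≤ V x) → V x1 < 0 →
      ‖x0‖ ≤ R₀ ∨ ‖x1‖ ≤ R₀ := by
  classical
  by_cases hex : ∃ x0 ∈ Ω, ∃ x1 ∈ Ω, (∀ x ∈ Ω, U x0 ≤ U x) ∧ U x0 < 0 ∧
      (∀ x ∈ Ω, V x1 ≤ V x) ∧ V x1 < 0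
  swap
  · refine ⟨1, one_pos, ?_⟩
    intro x0 hx0 x1 hx1 hminU hU0 hminV hV0
    exact absurd ⟨x0, hx0, x1, hx1, hminU, hU0, hminV, hV0⟩ hex
  obtain ⟨w0, hw0, w1, hw1, hw0min, hw0neg, hw1min, hw1neg⟩ := hex
  set t : ℝ := (n:ℝ) + β with htdef
  have ht : (n:ℝ) < t := by rw [htdef]; linarith [hβ.1]
  have ht' : 0 < t := lt_of_le_of_lt (Nat.cast_nonneg n) ht
  set a : ℝ := -U w0 with hadef
  set b : ℝ := -V w1 with hbdef
  have ha : 0 < a := by rw [hadef]; linarith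
  have hb : 0 < b := by rw [hbdef]; linarith
  set v1 : ℝ := (volume (ball (0:En n) 1)).toReal with hv1def
  have hv1 : 0 < v1 := by
    rw [hv1def]
    apply ENNReal.toReal_pos
    · exact (measure_ball_pos volume (0:En n) one_pos).ne'
    · exact measure_ball_lt_top.ne
  set κ : ℝ := v1 * ((5:ℝ) ^ t)⁻¹ with hκdef
  have hκ : 0 < κ := by
    rw [hκdef]
    have : (0:ℝ) < (5:ℝ) ^ t := Real.rpow_pos_of_pos (by norm_num) t
    positivity
  set Y : ℝ := c' * a / (2 * cβ * κ * b) with hYdef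
  have hY : 0 < Y := by rw [hYdef]; positivity
  set X : ℝ := Y ^ (1/(m-β)) with hXdef
  have hX : 0 < X := Real.rpow_pos_of_pos hY _
  refine ⟨max (max (max 1 |lam|) R₁) X, lt_of_lt_of_le one_pos (le_max_of_le_left
    (le_max_of_le_left (le_max_left _ _))), ?_⟩
  intro x0 hx0 x1 hx1 hminU hU0 hminV hV0
  right
  set R₀ : ℝ := max (max (max 1 |lam|) R₁) X with hR₀def
  by_contra hcon
  push_neg at hcon
  set r : ℝ := ‖x1‖ with hrdef
  have hr1 : 1 ≤ r := le_of_lt (lt_of_le_of_lt (by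
    rw [hR₀def]; exact le_max_of_le_left (le_max_of_le_left (le_max_left _ _))) hcon)
  have hrl : |lam| ≤ r := le_of_lt (lt_of_le_of_lt (by
    rw [hR₀def]; exact le_max_of_le_left (le_max_of_le_left (le_max_right _ _))) hcon)
  have hrR₁ : R₁ ≤ r := le_of_lt (lt_of_le_of_lt (by
    rw [hR₀def]; exact le_max_of_le_left (le_max_right _ _)) hcon)
  have hrX : X < r := lt_of_le_of_lt (by rw [hR₀def]; exact le_max_right _ _) hcon
  have hr0 : 0 < r := lt_of_lt_of_le one_pos hr1
  -- values of the minima agree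
  have hUval : U x0 = U w0 := le_antisymm (hminU w0 hw0) (hw0min x0 hx0)
  have hVval : V x1 = V w1 := le_antisymm (hminV w1 hw1) (hw1min x1 hx1)
  have hVx1b : V x1 = -b := by rw [hVval, hbdef]; ring
  have hUx1 : -a ≤ U x1 := by
    have := hminU x1 hx1
    rw [hUval] at this
    rw [hadef]; linarith
  -- minimum of V over the half space
  have hx1H : x1 ∈ halfSpace n lam := hΩsub hx1
  have hVmin' : ∀ z ∈ halfSpace n lam, V x1 ≤ V z := by
    intro z hz
    by_cases hzΩ : z ∈ Ω
    · exact hminV z hzΩ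
    · have := (hext z ⟨hz, hzΩ⟩).2
      linarith
  obtain ⟨L, hL, hLpos⟩ := hineq_V x1 hx1
  have hmain := frac_lap_bound β cβ hβ.1 hcβ lam V hV_L.1.aestronglyMeasurable hV_L.2
    hV_anti x1 hx1H hVmin' L hL
  -- integrability of the kernel for the lower bound on J
  have hd : 0 < lam - x1 0 := sub_pos.2 hx1H
  have hJint : IntegrableOn (fun z => (dist (reflPt n lam x1) z ^ t)⁻¹)
      (halfSpace n lam) volume := by
    have hHSm : MeasurableSet (halfSpace n lam) := halfSpace_isOpen.measurableSet
    have hRx0 : (reflPt n lam x1) 0 = 2 * lam - x1 0 := by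
      show (if (0:Fin n) = 0 then 2 * lam - x1 0 else x1 0) = _
      rw [if_pos rfl]
    have hdist : ∀ z ∈ halfSpace n lam, lam - x1 0 ≤ dist (reflPt n lam x1) z := by
      intro z hz
      have h1 := abs_coord_le_dist (reflPt n lam x1) z 0
      have h2 : (reflPt n lam x1) 0 - z 0 ≤ |(reflPt n lam x1) 0 - z 0| := le_abs_self _
      rw [hRx0] at h1 h2
      have hz0 : z 0 < lam := hz
      linarith
    refine (key_int V hV_L.1.aestronglyMeasurable ht hV_L.2 (reflPt n lam x1) hd hHSm
      hdist 1 0).congr ?_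
    exact Eventually.of_forall fun z => by simp
  have hJlow := J_lower β lam hβ.1 x1 hx1H hr1 hrl hJint
  set J : ℝ := ∫ z in halfSpace n lam, (dist (reflPt n lam x1) z ^ t)⁻¹ with hJdef
  -- L ≤ -2 cβ b κ r^(-β)
  have hJκ : κ * r ^ (-β) ≤ J := by
    rw [hκdef, hv1def, hrdef, htdef]
    exact hJlow
  have hL1 : L ≤ -(2 * cβ * b * (κ * r ^ (-β))) := by
    have h1 : 2 * cβ * V x1 * J = (2 * cβ * b) * (-J) := by rw [hVx1b]; ring
    have h2 : -J ≤ -(κ * r ^ (-β)) := neg_le_neg hJκ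
    have h3 : (2 * cβ * b) * (-J) ≤ (2 * cβ * b) * (-(κ * r ^ (-β))) := by
      apply mul_le_mul_of_nonneg_left h2 (by positivity)
    calc L ≤ 2 * cβ * V x1 * J := hmain
    _ = (2 * cβ * b) * (-J) := h1
    _ ≤ (2 * cβ * b) * (-(κ * r ^ (-β))) := h3
    _ = -(2 * cβ * b * (κ * r ^ (-β))) := by ring
  -- C₁ x1 * U x1 ≤ c' / r^m * a
  have hC1U : C₁ x1 * U x1 ≤ c' / r ^ m * a := by
    have hC1neg : C₁ x1 < 0 := (hsign x1 hx1).1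
    have h1 : C₁ x1 * U x1 ≤ C₁ x1 * (-a) :=
      mul_le_mul_of_nonpos_left hUx1 hC1neg.le
    have h2 : C₁ x1 * (-a) = (-C₁ x1) * a := by ring
    have h3 : (-C₁ x1) * a ≤ c' / r ^ m * a := by
      apply mul_le_mul_of_nonneg_right ((hC₁decay x1 hrR₁).2) ha.le
    exact le_trans h1 (le_trans (le_of_eq h2) h3)
  -- combine
  have hcomb : 2 * cβ * b * κ * r ^ (-β) ≤ c' / r ^ m * a := by
    have he : 2 * cβ * b * κ * r ^ (-β) = 2 * cβ * b * (κ * r ^ (-β)) := by ring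
    rw [he]
    have h5 : 2 * cβ * b * (κ * r ^ (-β)) ≤ -L := by linarith [hL1]
    have h6 : -L ≤ C₁ x1 * U x1 := by linarith [hLpos]
    exact le_trans h5 (le_trans h6 hC1U)
  -- multiply by r^β
  have hrβ : (0:ℝ) < r ^ (β:ℝ) := Real.rpow_pos_of_pos hr0 β
  have hrm : (0:ℝ) < r ^ (m:ℝ) := Real.rpow_pos_of_pos hr0 m
  have hcomb2 : 2 * cβ * b * κ ≤ c' * a * r ^ (β - m) := by
    have h1 : (2 * cβ * b * κ * r ^ (-β)) * r ^ β = 2 * cβ * b * κ := by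
      rw [mul_assoc, ← Real.rpow_add hr0]
      norm_num
    have h2 : (c' / r ^ m * a) * r ^ β = c' * a * r ^ (β - m) := by
      rw [Real.rpow_sub hr0, div_eq_mul_inv, div_eq_mul_inv]
      ring
    calc 2 * cβ * b * κ = (2 * cβ * b * κ * r ^ (-β)) * r ^ β := h1.symm
    _ ≤ (c' / r ^ m * a) * r ^ β := mul_le_mul_of_nonneg_right hcomb hrβ.le
    _ = c' * a * r ^ (β - m) := h2
  -- contradiction from r > X
  have hXβm : X ^ (β - m) = 2 * cβ * κ * b / (c' * a) := by
    rw [hXdef, ← Real.rpow_mul hY.le]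
    have hne : m - β ≠ 0 := sub_ne_zero.2 (ne_of_gt hm)
    have hmul : 1/(m-β) * (β - m) = -1 := by
      field_simp
      ring
    rw [hmul, Real.rpow_neg_one, hYdef, inv_div]
  have hlt : r ^ (β - m) < X ^ (β - m) :=
    Real.rpow_lt_rpow_of_neg hX hrX (by linarith)
  have hfin : c' * a * r ^ (β - m) < 2 * cβ * b * κ := by
    have := mul_lt_mul_of_pos_left hlt (by positivity : (0:ℝ) < c' * a)
    rw [hXβm] at this
    calc c' * a * r ^ (β - m) < c' * a * (2 * cβ * κ * b / (c' * a)) := this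
    _ = 2 * cβ * b * κ := by field_simp
  linarith
end
end

section
/- Let n ≥ 2, 0 < σ < 2, λ ∈ ℝ, and let W ∈ C^{1,1}_loc(ℝⁿ) ∩ L_σ be anti-symmetric about T_λ, i.e. W(x^λ) = -W(x) for all x ∈ ℝⁿ. Suppose W attains its minimum over Σ_λ at a point x̄ ∈ Σ_λ with W(x̄) < 0. Then (-Δ)^{σ/2}W(x̄) ≤ 2 C_{n,σ} W(x̄) ∫_{Σ_λ} |x̄ - y^λ|^{-(n+σ)} dy, and in particular (-Δ)^{σ/2}W(x̄) < 0. -/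
open MeasureTheory Filter Metric Set Bornology

set_option linter.unusedSectionVars false
noncomputable section

section AuxiliaryLemmas
variable {n : ℕ} [NeZero n] {lam : ℝ}

variable {n : ℕ} [NeZero n] {lam : ℝ}

lemma abs_coord_sub_le (a b : En n) (i : Fin n) : |a i - b i| ≤ dist a b := by
  rw [EuclideanSpace.dist_eq, ← Real.sqrt_sq_eq_abs]
  apply Real.sqrt_le_sqrt
  have := Finset.single_le_sum (f := fun j => dist (a j) (b j) ^ 2)
    (fun j _ => sq_nonneg _) (Finset.mem_univ i)
  simpa [Real.dist_eq, sq_abs] using this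

lemma reflPt_zero_apply (x : En n) : reflPt n lam x 0 = 2 * lam - x 0 := by simp [reflPt]

lemma reflPt_invol (x : En n) : reflPt n lam (reflPt n lam x) = x := by
  ext i
  by_cases h : i = 0
  · subst h; simp [reflPt]
  · simp [reflPt, h]

lemma reflPt_dist (a b : En n) : dist (reflPt n lam a) (reflPt n lam b) = dist a b := by
  rw [EuclideanSpace.dist_eq, EuclideanSpace.dist_eq]
  congr 1
  refine Finset.sum_congr rfl fun i _ => ?_
  by_cases h : i = 0
  · subst h; simp [reflPt, Real.dist_eq]; ring
  · simp [reflPt, h]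

/-- Reflection of the first coordinate as a linear isometry equivalence. -/
def negFirst (n : ℕ) [NeZero n] : En n ≃ₗᵢ[ℝ] En n where
  toLinearEquiv :=
  { toFun := fun x => WithLp.toLp 2 (fun i => if i = 0 then -x 0 else x i)
    invFun := fun x => WithLp.toLp 2 (fun i => if i = 0 then -x 0 else x i)
    map_add' := by
      intro a b; ext i
      by_cases h : i = 0
      · subst h; simp <;> ring
      · simp [h]
    map_smul' := by
      intro c a; ext i
      by_cases h : i = 0
      · subst h; simp <;> ring
      · simp [h]
    left_inv := by
      intro a; ext i
      by_cases h : i = 0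
      · subst h; simp
      · simp [h]
    right_inv := by
      intro a; ext i
      by_cases h : i = 0
      · subst h; simp
      · simp [h] }
  norm_map' := by
    intro x
    rw [EuclideanSpace.norm_eq, EuclideanSpace.norm_eq]
    congr 1
    refine Finset.sum_congr rfl fun i _ => ?_
    by_cases h : i = 0
    · subst h; simp
    · simp [h]

lemma reflPt_eq_comp :
    reflPt n lam = fun x => negFirst n x + EuclideanSpace.single (0 : Fin n) (2 * lam) := by
  funext x; ext i
  by_cases h : i = 0
  · subst h; simp [reflPt, negFirst, EuclideanSpace.single_apply]; ring
  · simp [reflPt, negFirst, h, EuclideanSpace.single_apply, Ne.symm h]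

lemma continuous_reflPt : Continuous (reflPt n lam) := by
  rw [reflPt_eq_comp]
  exact ((negFirst n).continuous).add continuous_const

lemma measurePreserving_reflPt :
    MeasurePreserving (reflPt n lam) (volume : Measure (En n)) volume := by
  rw [reflPt_eq_comp]
  exact (measurePreserving_add_right volume _).comp (negFirst n).measurePreserving

/-- Reflection as a measurable equivalence. -/
def reflEquiv (n : ℕ) [NeZero n] (lam : ℝ) : En n ≃ᵐ En n where
  toEquiv := Function.Involutive.toPerm _ (reflPt_invol (n := n) (lam := lam))
  measurable_toFun := continuous_reflPt.measurable
  measurable_invFun := continuous_reflPt.measurable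

lemma measurableEmbedding_reflPt : MeasurableEmbedding (reflPt n lam) :=
  (reflEquiv n lam).measurableEmbedding

lemma volume_hyperplane : volume {y : En n | y 0 = lam} = 0 := by
  set ℓ : En n →ₗ[ℝ] ℝ :=
    { toFun := fun y => y 0
      map_add' := fun a b => by simp
      map_smul' := fun c a => by simp }
  have hker : LinearMap.ker ℓ ≠ ⊤ := by
    intro h
    have h1 : EuclideanSpace.single (0 : Fin n) (1 : ℝ) ∈ LinearMap.ker ℓ := by
      rw [h]; trivial
    change (EuclideanSpace.single (0 : Fin n) (1 : ℝ)) 0 = 0 at h1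
    simp [EuclideanSpace.single_apply] at h1
  have h0 : volume (LinearMap.ker ℓ : Set (En n)) = 0 :=
    Measure.addHaar_submodule volume _ hker
  have hpre : {y : En n | y 0 = lam}
      = (fun y => y + EuclideanSpace.single (0 : Fin n) (-lam)) ⁻¹'
        (LinearMap.ker ℓ : Set (En n)) := by
    ext y
    change y 0 = lam ↔ y 0 + (EuclideanSpace.single (0 : Fin n) (-lam)) 0 = 0
    simp only [EuclideanSpace.single_apply, if_true]
    constructor
    · intro h; rw [h]; ring
    · intro h; linarith
  rw [hpre, measure_preimage_add_right, h0]

lemma aux_poly {p t : ℝ} (hp : 0 ≤ p) (ht : 0 ≤ t) : 1 + t ^ p ≤ 2 * (1 + t) ^ p := by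
  have h1 : (1 : ℝ) ≤ (1 + t) ^ p :=
    Real.one_le_rpow (by linarith) hp
  have h2 : t ^ p ≤ (1 + t) ^ p :=
    Real.rpow_le_rpow ht (by linarith) hp
  linarith

lemma aux_lb {a b t d : ℝ} (ha : 0 < a) (hb : 0 ≤ b) (ht : 0 ≤ t)
    (h1 : a ≤ d) (h2 : t - b ≤ d) : a / (1 + a + b) * (1 + t) ≤ d := by
  rw [div_mul_eq_mul_div, div_le_iff₀ (by linarith)]
  rcases le_or_gt t (a + b) with h | h
  · nlinarith
  · nlinarith

lemma integrable_base {p : ℝ} (hp : (n : ℝ) < p) :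
    Integrable (fun y : En n => (1 + ‖y‖) ^ (-p)) (volume : Measure (En n)) := by
  apply integrable_one_add_norm
  rwa [finrank_euclideanSpace_fin]

lemma aux_poly2 {p t : ℝ} (hp : 0 ≤ p) (ht : 0 ≤ t) : (1 + t) ^ p ≤ 2 ^ p * (1 + t ^ p) := by
  have h1 : (1 + t : ℝ) ≤ 2 * max 1 t := by
    rcases le_total t 1 with h | h
    · rw [max_eq_left h]; linarith
    · rw [max_eq_right h]; linarith
  have h2 : (1 + t) ^ p ≤ (2 * max 1 t) ^ p :=
    Real.rpow_le_rpow (by linarith) h1 hp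
  rw [Real.mul_rpow (by norm_num) (le_max_of_le_left zero_le_one)] at h2
  refine h2.trans ?_
  have h3 : (max 1 t : ℝ) ^ p ≤ 1 + t ^ p := by
    rcases le_total t 1 with h | h
    · rw [max_eq_left h, Real.one_rpow]
      have : (0:ℝ) ≤ t ^ p := Real.rpow_nonneg ht p
      linarith
    · rw [max_eq_right h]
      have : (1:ℝ) ≥ 0 := by norm_num
      linarith [Real.rpow_nonneg ht p, le_refl (t ^ p)]
  have h4 : (0:ℝ) < 2 ^ p := Real.rpow_pos_of_pos (by norm_num) p
  nlinarith

lemma integrable_inv_poly {p : ℝ} (hp : (n : ℝ) < p) (hp0 : 0 ≤ p) :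
    Integrable (fun y : En n => 1 / (1 + ‖y‖ ^ p)) (volume : Measure (En n)) := by
  refine ((integrable_base hp).const_mul (2 ^ p)).mono' ?_ ?_
  · refine (Continuous.aestronglyMeasurable ?_)
    refine continuous_const.div ?_ (fun y => by positivity)
    exact continuous_const.add (continuous_norm.rpow_const fun y => Or.inr hp0)
  · refine Eventually.of_forall fun y => ?_
    have h1 : (0:ℝ) < 1 + ‖y‖ ^ p := by positivity
    have h2 : (0:ℝ) < (1 + ‖y‖) ^ p := Real.rpow_pos_of_pos (by positivity) p
    rw [Real.norm_eq_abs, abs_of_nonneg (by positivity),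
      Real.rpow_neg (by positivity : (0:ℝ) ≤ 1 + ‖y‖)]
    rw [div_le_iff₀ h1, mul_assoc, inv_mul_eq_div, mul_div_assoc', le_div_iff₀ h2, one_mul]
    exact aux_poly2 hp0 (norm_nonneg y)

set_option maxHeartbeats 800000 in
lemma integrableOn_div_rpow {p : ℝ} (hp : (n : ℝ) < p) (hp0 : 0 < p)
    (f : En n → ℝ) (hf_m : AEStronglyMeasurable f (volume : Measure (En n)))
    (hf : Integrable (fun y : En n => |f y| / (1 + ‖y‖ ^ p)) volume)
    (s : Set (En n)) (hs : MeasurableSet s) (D : En n → ℝ) (hD : Continuous D)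
    (c : ℝ) (hc : 0 < c) (hbd : ∀ y ∈ s, c * (1 + ‖y‖) ≤ D y) :
    IntegrableOn (fun y => f y / D y ^ p) s := by
  have hcp : (0:ℝ) < c ^ p := Real.rpow_pos_of_pos hc p
  refine Integrable.mono' ((hf.const_mul (2 / c ^ p)).restrict (s := s)) ?_ ?_
  · have h1 : AEMeasurable (fun y => D y ^ p) ((volume : Measure (En n)).restrict s) :=
      ((hD.rpow_const fun x => Or.inr hp0.le).measurable).aemeasurable
    exact (hf_m.restrict.aemeasurable.div h1).aestronglyMeasurable
  · rw [ae_restrict_iff' hs]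
    refine Eventually.of_forall fun y hy => ?_
    have hy1 : (0:ℝ) < 1 + ‖y‖ := by positivity
    have hDy : 0 < D y := lt_of_lt_of_le (by positivity) (hbd y hy)
    have hDp : (c * (1 + ‖y‖)) ^ p ≤ D y ^ p :=
      Real.rpow_le_rpow (by positivity) (hbd y hy) hp0.le
    rw [Real.mul_rpow hc.le hy1.le] at hDp
    have h1p : (0:ℝ) < 1 + ‖y‖ ^ p := by positivity
    have h2 : (0:ℝ) < (1 + ‖y‖) ^ p := Real.rpow_pos_of_pos hy1 p
    have haux := aux_poly hp0.le (norm_nonneg y)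
    rw [Real.norm_eq_abs, abs_div, abs_of_nonneg (Real.rpow_nonneg hDy.le p)]
    have step1 : |f y| / D y ^ p ≤ |f y| / (c ^ p * (1 + ‖y‖) ^ p) := by
      gcongr
    refine step1.trans ?_
    have hrhs : 2 / c ^ p * (|f y| / (1 + ‖y‖ ^ p)) = 2 * |f y| / (c ^ p * (1 + ‖y‖ ^ p)) := by
      field_simp
    rw [hrhs, div_le_div_iff₀ (by positivity) (by positivity)]
    nlinarith [abs_nonneg (f y), mul_nonneg (abs_nonneg (f y)) hcp.le]

lemma integrableOn_one_div_rpow {p : ℝ} (hp : (n : ℝ) < p) (hp0 : 0 < p)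
    (s : Set (En n)) (hs : MeasurableSet s) (D : En n → ℝ) (hD : Continuous D)
    (c : ℝ) (hc : 0 < c) (hbd : ∀ y ∈ s, c * (1 + ‖y‖) ≤ D y) :
    IntegrableOn (fun y => 1 / D y ^ p) s := by
  refine integrableOn_div_rpow hp hp0 (fun _ => 1) aestronglyMeasurable_const ?_ s hs D hD c hc hbd
  simpa using integrable_inv_poly hp hp0.le

lemma continuous_coord : Continuous (fun y : En n => y 0) := by
  refine LipschitzWith.continuous (K := 1) (LipschitzWith.of_dist_le_mul fun a b => ?_)
  rw [Real.dist_eq, NNReal.coe_one, one_mul]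
  exact abs_coord_sub_le a b 0

lemma dist_le_dist_refl {x y : En n} (hx : x 0 ≤ lam) (hy : y 0 ≤ lam) :
    dist x y ≤ dist x (reflPt n lam y) := by
  rw [EuclideanSpace.dist_eq, EuclideanSpace.dist_eq]
  apply Real.sqrt_le_sqrt
  refine Finset.sum_le_sum fun i _ => ?_
  by_cases h : i = 0
  · subst h
    rw [reflPt_zero_apply, Real.dist_eq, Real.dist_eq, sq_abs, sq_abs]
    nlinarith
  · simp [reflPt, h]

end AuxiliaryLemmas

set_option maxHeartbeats 1000000 in
/-- key pointwise estimate at a negative minimum of an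
anti-symmetric function: inequality (2.1)/(d-1). -/
theorem statement5
    (n : ℕ) [NeZero n] (hn : 2 ≤ n)
    (σ : ℝ) (hσ : 0 < σ ∧ σ < 2) (lam : ℝ)
    (cns : ℝ) (hcns : 0 < cns)
    (W : En n → ℝ) (hW_reg : C11loc n W) (hW_L : MemL n σ W)
    (hW_anti : ∀ x, W (reflPt n lam x) = -W x)
    (xb : En n) (hxb : xb ∈ halfSpace n lam)
    (hmin : ∀ y ∈ halfSpace n lam, W xb ≤ W y) (hneg : W xb < 0) :
    ∀ L, HasFracLap n σ cns W xb L →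
      L ≤ 2 * cns * W xb *
        (∫ y in halfSpace n lam, 1 / dist xb (reflPt n lam y) ^ ((n : ℝ) + σ)) ∧
      L < 0 := by
  intro L hL
  unfold HasFracLap at hL
  set p : ℝ := (n : ℝ) + σ with hpdef
  have hn1 : (1:ℝ) ≤ (n:ℝ) := by exact_mod_cast Nat.one_le_of_lt hn
  have hnp : (n : ℝ) < p := by rw [hpdef]; linarith [hσ.1]
  have hp0 : (0:ℝ) < p := lt_of_lt_of_le (by linarith) hnp.le
  have hδ : 0 < lam - xb 0 := sub_pos.2 hxb
  set δ : ℝ := lam - xb 0 with hδdef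
  -- continuity of W
  have hWc : Continuous W := by
    rw [continuous_iff_continuousAt]
    intro x
    obtain ⟨ε, hε, K, -, hdiff, -⟩ := hW_reg x (mem_univ x)
    exact (hdiff x (mem_ball_self hε)).continuousAt
  have hWm : AEStronglyMeasurable W (volume : Measure (En n)) := hWc.aestronglyMeasurable
  have hfW : Integrable (fun y : En n => |W y| / (1 + ‖y‖ ^ p)) volume := hW_L.2
  -- bound for W on the closed ball of radius δ/2
  obtain ⟨M, hM⟩ := (isCompact_closedBall xb (δ/2)).exists_bound_of_continuousOn
    hWc.continuousOn
  have hMxb : |W xb| ≤ M := by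
    simpa using hM xb (mem_closedBall_self (by positivity))
  have hM0 : 0 ≤ M := le_trans (abs_nonneg _) hMxb
  -- distance lower bounds for the reflected kernel
  have hRdistlow : ∀ y : En n, y 0 ≤ lam → δ ≤ dist xb (reflPt n lam y) := by
    intro y hy
    have h1 := abs_coord_sub_le xb (reflPt n lam y) 0
    have h2 : xb 0 - reflPt n lam y 0 ≤ -δ := by
      rw [reflPt_zero_apply]; rw [hδdef]; linarith
    have h3 : δ ≤ |xb 0 - reflPt n lam y 0| := by
      rw [abs_of_nonpos (by linarith)]; linarith
    linarith
  have hdist_Rxb : ∀ y : En n, dist xb (reflPt n lam y) = dist (reflPt n lam xb) y := by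
    intro y
    have h := reflPt_dist (lam := lam) xb (reflPt n lam y)
    rw [reflPt_invol] at h; exact h.symm
  have hc1 : (0:ℝ) < δ / (1 + δ + ‖reflPt n lam xb‖) := by positivity
  have hbd1 : ∀ y : En n, y 0 ≤ lam →
      δ / (1 + δ + ‖reflPt n lam xb‖) * (1 + ‖y‖) ≤ dist xb (reflPt n lam y) := by
    intro y hy
    refine aux_lb hδ (norm_nonneg _) (norm_nonneg y) (hRdistlow y hy) ?_
    rw [hdist_Rxb y, dist_comm, dist_eq_norm]
    linarith [norm_sub_norm_le y (reflPt n lam xb)]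
  -- measurable sets
  have hOpenHalf : IsOpen (halfSpace n lam) := isOpen_lt continuous_coord continuous_const
  have hMeasHalf : MeasurableSet (halfSpace n lam) := hOpenHalf.measurableSet
  have hHm : MeasurableSet {y : En n | y 0 ≤ lam} :=
    (isClosed_le continuous_coord continuous_const).measurableSet
  have hSubHalf : halfSpace n lam ⊆ {y : En n | y 0 ≤ lam} := fun y hy => le_of_lt (show y 0 < lam from hy)
  -- continuity of kernels
  have hDcont : Continuous (fun y : En n => dist xb y) :=
    Continuous.dist continuous_const continuous_id
  have hD'cont : Continuous (fun y : En n => dist xb (reflPt n lam y)) :=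
    Continuous.dist continuous_const continuous_reflPt
  -- integrability on the half space for the reflected kernel
  have Ik'1 : IntegrableOn (fun y => 1 / dist xb (reflPt n lam y) ^ p)
      {y : En n | y 0 ≤ lam} :=
    integrableOn_one_div_rpow hnp hp0 _ hHm _ hD'cont _ hc1 (fun y hy => hbd1 y hy)
  have Ik'W : IntegrableOn (fun y => W y / dist xb (reflPt n lam y) ^ p)
      {y : En n | y 0 ≤ lam} :=
    integrableOn_div_rpow hnp hp0 W hWm hfW _ hHm _ hD'cont _ hc1 (fun y hy => hbd1 y hy)
  have IkG : IntegrableOn (fun y => (W xb + W y) / dist xb (reflPt n lam y) ^ p)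
      {y : En n | y 0 ≤ lam} := by
    refine ((Ik'1.const_mul (W xb)).add Ik'W).congr (ae_of_all _ fun y => ?_)
    show W xb * (1 / dist xb (reflPt n lam y) ^ p) + _ = _
    ring
  have IkGm : IntegrableOn (fun y => (W xb - W y) / dist xb (reflPt n lam y) ^ p)
      {y : En n | y 0 ≤ lam} := by
    refine ((Ik'1.const_mul (W xb)).sub Ik'W).congr (ae_of_all _ fun y => ?_)
    show W xb * (1 / dist xb (reflPt n lam y) ^ p) - _ = _
    ring
  set J : ℝ := ∫ y in halfSpace n lam, 1 / dist xb (reflPt n lam y) ^ p with hJdef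
  set Cst : ℝ := 4 * M / δ ^ p with hCdef
  have hδp : (0:ℝ) < δ ^ p := Real.rpow_pos_of_pos hδ p
  have hCst : 0 ≤ Cst := by rw [hCdef]; positivity
  -- the key estimate
  have key : ∀ ε : ℝ, 0 < ε → ε < δ/2 →
      (∫ y in {y : En n | ε ≤ dist xb y}, (W xb - W y) / dist xb y ^ p)
        ≤ 2 * W xb * J + Cst * (volume (ball xb ε)).toReal := by
    intro ε hε0 hεδ
    set S : Set (En n) := {y : En n | ε ≤ dist xb y} with hSdef
    have hSm : MeasurableSet S :=
      (isClosed_le continuous_const hDcont).measurableSet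
    have hcε : (0:ℝ) < ε / (1 + ε + ‖xb‖) := by positivity
    have hbdε : ∀ y ∈ S, ε / (1 + ε + ‖xb‖) * (1 + ‖y‖) ≤ dist xb y := by
      intro y hy
      refine aux_lb hε0 (norm_nonneg _) (norm_nonneg y) hy ?_
      rw [dist_comm, dist_eq_norm]
      linarith [norm_sub_norm_le y xb]
    -- integrability on S
    have Ik1 : IntegrableOn (fun y => 1 / dist xb y ^ p) S :=
      integrableOn_one_div_rpow hnp hp0 _ hSm _ hDcont _ hcε hbdε
    have IkW : IntegrableOn (fun y => W y / dist xb y ^ p) S :=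
      integrableOn_div_rpow hnp hp0 W hWm hfW _ hSm _ hDcont _ hcε hbdε
    have IkF : IntegrableOn (fun y => (W xb - W y) / dist xb y ^ p) S := by
      refine ((Ik1.const_mul (W xb)).sub IkW).congr (ae_of_all _ fun y => ?_)
      show W xb * (1 / dist xb y ^ p) - _ = _
      ring
    -- ball inside half space
    have hball : ∀ y : En n, dist xb y < δ → y 0 < lam := by
      intro y hy
      have h1 := abs_coord_sub_le xb y 0
      have h2 : y 0 - xb 0 ≤ |xb 0 - y 0| := by rw [abs_sub_comm]; exact le_abs_self _
      linarith
    -- step A : split the integral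
    have stepA : (∫ y in S, (W xb - W y) / dist xb y ^ p)
        = (∫ y in S ∩ halfSpace n lam, (W xb - W y) / dist xb y ^ p)
          + ∫ y in S \ halfSpace n lam, (W xb - W y) / dist xb y ^ p :=
      (integral_inter_add_diff hMeasHalf IkF).symm
    -- step B : reflect the second piece
    have hpre : (reflPt n lam) ⁻¹' (S \ halfSpace n lam) = {y : En n | y 0 ≤ lam} := by
      ext y
      simp only [mem_preimage, mem_diff, hSdef, mem_setOf_eq, halfSpace, not_lt,
        reflPt_zero_apply]
      constructor
      · intro h; linarith [h.2]
      · intro h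
        refine ⟨le_trans ?_ (hRdistlow y h), by linarith⟩
        linarith
    have stepB : (∫ y in S \ halfSpace n lam, (W xb - W y) / dist xb y ^ p)
        = ∫ y in {y : En n | y 0 ≤ lam}, (W xb + W y) / dist xb (reflPt n lam y) ^ p := by
      have h := (measurePreserving_reflPt (n := n) (lam := lam)).setIntegral_preimage_emb
        measurableEmbedding_reflPt
        (fun y => (W xb - W y) / dist xb y ^ p) (S \ halfSpace n lam)
      rw [hpre] at h
      rw [← h]
      refine setIntegral_congr_fun hHm fun y _ => ?_
      rw [hW_anti y, sub_neg_eq_add]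
    -- step C : half space up to measure zero
    have hae : {y : En n | y 0 ≤ lam} =ᵐ[volume] halfSpace n lam := by
      rw [ae_eq_set]
      constructor
      · have : {y : En n | y 0 ≤ lam} \ halfSpace n lam = {y : En n | y 0 = lam} := by
          ext y
          simp only [mem_diff, mem_setOf_eq, halfSpace, not_lt]
          constructor
          · intro h; exact le_antisymm h.1 h.2
          · intro h; exact ⟨le_of_eq h, ge_of_eq h⟩
        rw [this]
        exact volume_hyperplane
      · have : halfSpace n lam \ {y : En n | y 0 ≤ lam} = ∅ := by
          rw [diff_eq_empty]; exact hSubHalf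
        rw [this, measure_empty]
    have stepC : (∫ y in {y : En n | y 0 ≤ lam}, (W xb + W y) / dist xb (reflPt n lam y) ^ p)
        = ∫ y in halfSpace n lam, (W xb + W y) / dist xb (reflPt n lam y) ^ p :=
      setIntegral_congr_set hae
    -- step D : monotonicity on S ∩ Σ
    have stepD : (∫ y in S ∩ halfSpace n lam, (W xb - W y) / dist xb y ^ p)
        ≤ ∫ y in S ∩ halfSpace n lam, (W xb - W y) / dist xb (reflPt n lam y) ^ p := by
      refine setIntegral_mono_on (IkF.mono_set inter_subset_left)
        (IkGm.mono_set (fun y hy => hSubHalf hy.2)) (hSm.inter hMeasHalf) ?_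
      intro y hy
      have hyS : ε ≤ dist xb y := hy.1
      have hyHalf : y 0 < lam := hy.2
      have hd1 : (0:ℝ) < dist xb y ^ p :=
        Real.rpow_pos_of_pos (lt_of_lt_of_le hε0 hyS) p
      have hd2 : (0:ℝ) < dist xb (reflPt n lam y) ^ p :=
        Real.rpow_pos_of_pos (lt_of_lt_of_le hδ (hRdistlow y hyHalf.le)) p
      have hdd : dist xb y ^ p ≤ dist xb (reflPt n lam y) ^ p :=
        Real.rpow_le_rpow dist_nonneg (dist_le_dist_refl hxb.le hyHalf.le) hp0.le
      have hnum : W xb - W y ≤ 0 := sub_nonpos.2 (hmin y hyHalf)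
      rw [div_le_div_iff₀ hd1 hd2]
      nlinarith
    -- step E : combine the two integrals over Σ
    have hGsplit : (∫ y in halfSpace n lam, (W xb + W y) / dist xb (reflPt n lam y) ^ p)
        = (∫ y in halfSpace n lam ∩ S, (W xb + W y) / dist xb (reflPt n lam y) ^ p)
          + ∫ y in halfSpace n lam \ S, (W xb + W y) / dist xb (reflPt n lam y) ^ p :=
      (integral_inter_add_diff hSm (IkG.mono_set hSubHalf)).symm
    have hk'split : J = (∫ y in halfSpace n lam ∩ S, 1 / dist xb (reflPt n lam y) ^ p)
          + ∫ y in halfSpace n lam \ S, 1 / dist xb (reflPt n lam y) ^ p := by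
      rw [hJdef]
      exact (integral_inter_add_diff hSm (Ik'1.mono_set hSubHalf)).symm
    have hcomb : (∫ y in halfSpace n lam ∩ S, (W xb - W y) / dist xb (reflPt n lam y) ^ p)
          + (∫ y in halfSpace n lam ∩ S, (W xb + W y) / dist xb (reflPt n lam y) ^ p)
        = 2 * W xb * ∫ y in halfSpace n lam ∩ S, 1 / dist xb (reflPt n lam y) ^ p := by
      rw [← integral_const_mul]
      rw [← integral_add (IkGm.mono_set (fun y hy => hSubHalf hy.1))
        (IkG.mono_set (fun y hy => hSubHalf hy.1))]
      refine setIntegral_congr_fun (hMeasHalf.inter hSm) fun y _ => ?_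
      ring
    -- step G : the complement piece is the ball
    have hDiffBall : halfSpace n lam \ S = ball xb ε := by
      ext y
      simp only [mem_diff, hSdef, mem_setOf_eq, halfSpace, not_le, mem_ball]
      constructor
      · intro h; rw [dist_comm]; exact h.2
      · intro h
        rw [dist_comm] at h
        exact ⟨hball y (lt_of_lt_of_le h (by linarith)), h⟩
    -- bounds on the two ball integrals
    have hballvol : volume (ball xb ε) < ⊤ := measure_ball_lt_top
    have hGball : |∫ y in ball xb ε, (W xb + W y) / dist xb (reflPt n lam y) ^ p|
        ≤ (2 * M / δ ^ p) * (volume (ball xb ε)).toReal := by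
      rw [← Real.norm_eq_abs]
      refine norm_setIntegral_le_of_norm_le_const hballvol ?_
      intro y hy
      have hy1 : dist y xb < ε := mem_ball.1 hy
      have hy2 : y ∈ closedBall xb (δ/2) :=
        mem_closedBall.2 (le_of_lt (lt_of_lt_of_le hy1 hεδ.le))
      have hWy : |W y| ≤ M := by simpa using hM y hy2
      have hy0 : y 0 ≤ lam := by
        refine (hball y ?_).le
        rw [dist_comm]; exact lt_trans hy1 (by linarith)
      have hd2 : δ ^ p ≤ dist xb (reflPt n lam y) ^ p :=
        Real.rpow_le_rpow hδ.le (hRdistlow y hy0) hp0.le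
      have hd2' : (0:ℝ) < dist xb (reflPt n lam y) ^ p := lt_of_lt_of_le hδp hd2
      rw [Real.norm_eq_abs, abs_div, abs_of_pos hd2', div_le_div_iff₀ hd2' hδp]
      have habs : |W xb + W y| ≤ 2 * M := by
        calc |W xb + W y| ≤ |W xb| + |W y| := abs_add_le _ _
        _ ≤ 2 * M := by linarith
      nlinarith [abs_nonneg (W xb + W y)]
    have hk'ball : |∫ y in ball xb ε, 1 / dist xb (reflPt n lam y) ^ p|
        ≤ (1 / δ ^ p) * (volume (ball xb ε)).toReal := by
      rw [← Real.norm_eq_abs]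
      refine norm_setIntegral_le_of_norm_le_const hballvol ?_
      intro y hy
      have hy1 : dist y xb < ε := mem_ball.1 hy
      have hy0 : y 0 ≤ lam := by
        refine (hball y ?_).le
        rw [dist_comm]; exact lt_trans hy1 (by linarith)
      have hd2 : δ ^ p ≤ dist xb (reflPt n lam y) ^ p :=
        Real.rpow_le_rpow hδ.le (hRdistlow y hy0) hp0.le
      have hd2' : (0:ℝ) < dist xb (reflPt n lam y) ^ p := lt_of_lt_of_le hδp hd2
      rw [Real.norm_eq_abs, abs_div, abs_of_pos hd2', abs_one]
      exact div_le_div₀ (by positivity) le_rfl hδp hd2  -- 1/d ≤ 1/δ^p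
    -- put everything together
    have hIC : S ∩ halfSpace n lam = halfSpace n lam ∩ S := inter_comm _ _
    calc (∫ y in S, (W xb - W y) / dist xb y ^ p)
        = (∫ y in S ∩ halfSpace n lam, (W xb - W y) / dist xb y ^ p)
          + ∫ y in S \ halfSpace n lam, (W xb - W y) / dist xb y ^ p := stepA
      _ ≤ (∫ y in S ∩ halfSpace n lam, (W xb - W y) / dist xb (reflPt n lam y) ^ p)
          + ∫ y in halfSpace n lam, (W xb + W y) / dist xb (reflPt n lam y) ^ p := by
          rw [stepB, stepC]; exact add_le_add stepD le_rfl
      _ = 2 * W xb * (∫ y in halfSpace n lam ∩ S, 1 / dist xb (reflPt n lam y) ^ p)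
          + ∫ y in ball xb ε, (W xb + W y) / dist xb (reflPt n lam y) ^ p := by
          rw [hGsplit, hDiffBall, hIC, ← add_assoc, hcomb]
      _ = 2 * W xb * J - 2 * W xb * (∫ y in ball xb ε, 1 / dist xb (reflPt n lam y) ^ p)
          + ∫ y in ball xb ε, (W xb + W y) / dist xb (reflPt n lam y) ^ p := by
          rw [hk'split, hDiffBall]; ring
      _ ≤ 2 * W xb * J + Cst * (volume (ball xb ε)).toReal := by
          have h1 : - (2 * W xb * (∫ y in ball xb ε, 1 / dist xb (reflPt n lam y) ^ p))
              ≤ 2 * M * ((1 / δ ^ p) * (volume (ball xb ε)).toReal) := by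
            have h2 := hk'ball
            have h3 : |2 * W xb| ≤ 2 * M := by
              rw [abs_mul, abs_two]; linarith [hMxb, abs_nonneg (W xb)]
            calc - (2 * W xb * (∫ y in ball xb ε, 1 / dist xb (reflPt n lam y) ^ p))
                ≤ |2 * W xb * (∫ y in ball xb ε, 1 / dist xb (reflPt n lam y) ^ p)| :=
                  neg_le_abs _
              _ = |2 * W xb| * |∫ y in ball xb ε, 1 / dist xb (reflPt n lam y) ^ p| :=
                  abs_mul _ _
              _ ≤ 2 * M * ((1 / δ ^ p) * (volume (ball xb ε)).toReal) := by
                  refine mul_le_mul h3 h2 (abs_nonneg _) (by linarith)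
          have h4 : (∫ y in ball xb ε, (W xb + W y) / dist xb (reflPt n lam y) ^ p)
              ≤ (2 * M / δ ^ p) * (volume (ball xb ε)).toReal :=
            le_trans (le_abs_self _) hGball
          have h5 : 2 * M * ((1 / δ ^ p) * (volume (ball xb ε)).toReal)
              + (2 * M / δ ^ p) * (volume (ball xb ε)).toReal
              = Cst * (volume (ball xb ε)).toReal := by
            rw [hCdef]; field_simp; ring
          linarith
  -- the volume of small balls
  have hvol : ∀ ε : ℝ, 0 < ε → (volume (ball xb ε)).toReal
      = ε ^ n * (volume (ball (0 : En n) 1)).toReal := by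
    intro ε hε
    rw [Measure.addHaar_ball volume xb hε.le, ENNReal.toReal_mul,
      ENNReal.toReal_ofReal (by positivity), finrank_euclideanSpace_fin]
  set c0 : ℝ := (volume (ball (0 : En n) 1)).toReal with hc0def
  -- limit of the upper bound
  have htg : Tendsto (fun ε : ℝ => cns * (2 * W xb * J + Cst * (ε ^ n * c0)))
      (nhdsWithin 0 (Ioi 0)) (nhds (cns * (2 * W xb * J))) := by
    have hcont : Continuous (fun ε : ℝ => cns * (2 * W xb * J + Cst * (ε ^ n * c0))) := by
      continuity
    have h0 : cns * (2 * W xb * J + Cst * ((0:ℝ) ^ n * c0)) = cns * (2 * W xb * J) := by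
      rw [zero_pow (NeZero.ne n)]; ring
    have := hcont.tendsto 0
    rw [h0] at this
    exact this.mono_left nhdsWithin_le_nhds
  -- eventual inequality
  have hev : ∀ᶠ ε in nhdsWithin (0:ℝ) (Ioi 0),
      cns * (∫ y in {y : En n | ε ≤ dist xb y}, (W xb - W y) / dist xb y ^ p)
        ≤ cns * (2 * W xb * J + Cst * (ε ^ n * c0)) := by
    filter_upwards [Ioo_mem_nhdsGT_of_mem (Set.mem_Ico.2 ⟨le_refl (0:ℝ), show (0:ℝ) < δ/2 by positivity⟩)]
      with ε hε
    have h := key ε hε.1 hε.2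
    rw [hvol ε hε.1] at h
    exact mul_le_mul_of_nonneg_left h hcns.le
  have hle : L ≤ cns * (2 * W xb * J) := le_of_tendsto_of_tendsto hL htg hev
  -- positivity of J
  have hJpos : 0 < J := by
    rw [hJdef]
    rw [setIntegral_pos_iff_support_of_nonneg_ae
      (ae_of_all _ fun y => by positivity) (Ik'1.mono_set hSubHalf)]
    refine lt_of_lt_of_le (hOpenHalf.measure_pos volume ⟨xb, hxb⟩) (measure_mono ?_)
    intro y hy
    refine ⟨?_, hy⟩
    have hd : (0:ℝ) < dist xb (reflPt n lam y) ^ p :=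
      Real.rpow_pos_of_pos (lt_of_lt_of_le hδ (hRdistlow y (le_of_lt hy))) p
    simp only [Function.mem_support]
    positivity
  constructor
  · calc L ≤ cns * (2 * W xb * J) := hle
      _ = 2 * cns * W xb * J := by ring
  · refine lt_of_le_of_lt hle ?_
    have : cns * (2 * W xb * J) < 0 := by
      apply mul_neg_of_pos_of_neg hcns
      exact mul_neg_of_neg_of_pos (by linarith) hJpos
    exact this
end
end

section
/- Let n ≥ 2, 0 < σ < 2, λ ∈ ℝ, and let x̄ ∈ Σ_λ with x̄ ≠ 0 and 2|x̄| + x̄₁ > λ (which holds in particular when |x̄| is sufficiently large for fixed λ). Then the ball of radius |x̄| centered at x² = (3|x̄| + x̄₁, x̄') is contained in the half-space {y : y₁ > λ}, and ∫_{{y : y₁ > λ}} |x̄ - y|^{-(n+σ)} dy ≥ ω_n · 4^{-(n+σ)} · |x̄|^{-σ}, where ω_n denotes the volume of the unit ball in ℝⁿ. -/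
open MeasureTheory Filter Metric Set Bornology

noncomputable section

/-- The auxiliary point `x² = (3|x̄| + x̄₁, x̄')`. -/
def auxPt (n : ℕ) [NeZero n] (x : En n) : En n :=
  WithLp.toLp 2 (fun i => if i = 0 then 3 * ‖x‖ + x 0 else x i)

lemma coord_le_norm {n : ℕ} (x : En n) (i : Fin n) : |x i| ≤ ‖x‖ := by
  rw [EuclideanSpace.norm_eq]
  have h1 : |x i| = Real.sqrt (‖x i‖ ^ 2) := by
    rw [Real.sqrt_sq_eq_abs, abs_norm, Real.norm_eq_abs]
  rw [h1]
  apply Real.sqrt_le_sqrt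
  exact Finset.single_le_sum (fun j _ => sq_nonneg ‖x j‖) (Finset.mem_univ i)

lemma dist_coord_le {n : ℕ} (x y : En n) (i : Fin n) : |x i - y i| ≤ dist x y := by
  have := coord_le_norm (x - y) i
  rw [dist_eq_norm]; simpa using this

lemma dist_auxPt {n : ℕ} [NeZero n] (x : En n) : dist x (auxPt n x) = 3 * ‖x‖ := by
  rw [EuclideanSpace.dist_eq]
  have h : ∀ i : Fin n, dist (x i) (auxPt n x i) ^ 2 = if i = 0 then (3 * ‖x‖) ^ 2 else 0 := by
    intro i
    by_cases hi : i = 0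
    · subst hi
      have ha : auxPt n x 0 = 3 * ‖x‖ + x 0 := by simp [auxPt]
      rw [ha, if_pos rfl, Real.dist_eq, sq_abs]; ring
    · simp [auxPt, hi, Real.dist_eq]
  simp only [h]
  rw [Finset.sum_ite_eq' Finset.univ (0 : Fin n) (fun _ => (3 * ‖x‖) ^ 2)]
  simp only [Finset.mem_univ, if_pos]
  rw [Real.sqrt_sq (by positivity)]

/-- the geometric lower bound (2.2)/(d-2) used in the proof
of decay at infinity. `ω_n` is the volume of the unit ball of `ℝⁿ`. -/
theorem statement6
    (n : ℕ) [NeZero n] (hn : 2 ≤ n)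
    (σ : ℝ) (hσ : 0 < σ ∧ σ < 2) (lam : ℝ)
    (xb : En n) (hxb : xb ∈ halfSpace n lam) (hxb0 : xb ≠ 0)
    (hfar : lam < 2 * ‖xb‖ + xb 0) :
    ball (auxPt n xb) ‖xb‖ ⊆ {y : En n | lam < y 0} ∧
    (volume (ball (0 : En n) 1)).toReal * (4 : ℝ) ^ (-((n : ℝ) + σ)) *
        ‖xb‖ ^ (-σ) ≤
      ∫ y in {y : En n | lam < y 0}, 1 / dist xb y ^ ((n : ℝ) + σ) := by
  have hx : 0 < ‖xb‖ := norm_pos_iff.mpr hxb0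
  set r : ℝ := (n : ℝ) + σ with hr
  have hrpos : 0 < r := by have := hσ.1; positivity
  have hnr : (n : ℝ) < r := by simp [hr]; linarith [hσ.1]
  set S : Set (En n) := {y : En n | lam < y 0} with hS
  -- ball ⊆ S
  have hball : ball (auxPt n xb) ‖xb‖ ⊆ S := by
    intro y hy
    have h0 : |y 0 - auxPt n xb 0| ≤ dist y (auxPt n xb) := dist_coord_le _ _ 0
    have ha : auxPt n xb 0 = 3 * ‖xb‖ + xb 0 := by simp [auxPt]
    have hd : dist y (auxPt n xb) < ‖xb‖ := mem_ball.mp hy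
    have := abs_le.mp (h0.trans hd.le)
    simp only [hS, mem_setOf_eq]
    have := this.1
    rw [ha] at this
    linarith
  refine ⟨hball, ?_⟩
  -- on S, dist xb y > δ
  have hδ : 0 < lam - xb 0 := by
    have : xb 0 < lam := hxb
    linarith
  set δ := lam - xb 0 with hδdef
  have hdistS : ∀ y ∈ S, δ ≤ dist xb y := by
    intro y hy
    have h0 : |xb 0 - y 0| ≤ dist xb y := dist_coord_le _ _ 0
    have : y 0 - xb 0 ≤ |xb 0 - y 0| := by rw [abs_sub_comm]; exact le_abs_self _
    have hy' : lam < y 0 := hy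
    linarith
  -- integrability on S
  set f : En n → ℝ := fun y => 1 / dist xb y ^ r with hf
  have hfm : Measurable f := by
    apply Measurable.div measurable_const
    exact (measurable_const.dist measurable_id).pow_const r |>.mono le_rfl le_rfl
  have hSmeas : MeasurableSet S := by
    have hc : Continuous fun y : En n => y 0 := (continuous_apply 0).comp (PiLp.continuous_ofLp 2 _)
    exact (isOpen_lt continuous_const hc).measurableSet
  have hfnn : ∀ y, 0 ≤ f y := fun y =>
    div_nonneg zero_le_one (Real.rpow_nonneg dist_nonneg r)
  set C : ℝ := (1 + δ) / δ with hC
  have hCpos : 0 < C := by positivity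
  have hint : IntegrableOn f S volume := by
    have h1 : Integrable (fun y : En n => (1 + ‖y‖) ^ (-r)) volume :=
      integrable_one_add_norm (by rw [finrank_euclideanSpace_fin]; exact hnr)
    have hg : Integrable (fun y : En n => C ^ r * (1 + ‖y - xb‖) ^ (-r)) volume :=
      (h1.comp_sub_right xb).const_mul _
    refine Integrable.mono' hg.restrict hfm.aestronglyMeasurable ?_
    filter_upwards [ae_restrict_mem hSmeas] with y hy
    have hd : δ ≤ dist xb y := hdistS y hy
    have hdpos : 0 < dist xb y := lt_of_lt_of_le hδ hd
    have hdn : dist xb y = ‖y - xb‖ := by rw [dist_comm, dist_eq_norm]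
    have hkey : 1 + dist xb y ≤ C * dist xb y := by
      rw [hC, div_mul_eq_mul_div, le_div_iff₀ hδ]
      nlinarith
    have h2 : (1 + dist xb y) ^ r ≤ (C * dist xb y) ^ r :=
      Real.rpow_le_rpow (by positivity) hkey hrpos.le
    rw [Real.norm_eq_abs, abs_of_nonneg (hfnn y)]
    have hmul : (C * dist xb y) ^ r = C ^ r * dist xb y ^ r :=
      Real.mul_rpow hCpos.le dist_nonneg
    show 1 / dist xb y ^ r ≤ C ^ r * (1 + ‖y - xb‖) ^ (-r)
    rw [← hdn, Real.rpow_neg (by positivity : (0:ℝ) ≤ 1 + dist xb y), ← div_eq_mul_inv]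
    calc 1 / dist xb y ^ r = C ^ r / (C * dist xb y) ^ r := by
          rw [hmul]; field_simp
      _ ≤ C ^ r / (1 + dist xb y) ^ r :=
          div_le_div_of_nonneg_left (by positivity)
            (Real.rpow_pos_of_pos (by positivity) r) h2
  -- integral over ball ≤ integral over S
  have hball_int : IntegrableOn f (ball (auxPt n xb) ‖xb‖) volume := hint.mono_set hball
  have hmono : (∫ y in ball (auxPt n xb) ‖xb‖, f y) ≤ ∫ y in S, f y := by
    apply setIntegral_mono_set hint
    · exact Filter.Eventually.of_forall fun y => hfnn y
    · exact HasSubset.Subset.eventuallyLE hball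
  -- lower bound on the ball
  have hdaux : dist xb (auxPt n xb) = 3 * ‖xb‖ := dist_auxPt xb
  have hlow : (volume (ball (auxPt n xb) ‖xb‖)).toReal * (1 / (4 * ‖xb‖) ^ r)
      ≤ ∫ y in ball (auxPt n xb) ‖xb‖, f y := by
    have := setIntegral_const (μ := volume) (s := ball (auxPt n xb) ‖xb‖)
      (c := 1 / (4 * ‖xb‖) ^ r)
    rw [smul_eq_mul, measureReal_def] at this
    rw [← this]
    apply setIntegral_mono_on (integrableOn_const measure_ball_lt_top.ne)
      hball_int measurableSet_ball
    intro y hy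
    have hd1 : dist xb y ≤ 4 * ‖xb‖ := by
      have := dist_triangle xb (auxPt n xb) y
      have h2 : dist (auxPt n xb) y < ‖xb‖ := by rw [dist_comm]; exact mem_ball.mp hy
      linarith
    have hd0 : 0 < dist xb y := by
      have := dist_triangle xb y (auxPt n xb)
      have h2 : dist y (auxPt n xb) < ‖xb‖ := mem_ball.mp hy
      linarith
    rw [hf]
    apply div_le_div_of_nonneg_left zero_le_one (Real.rpow_pos_of_pos hd0 r)
    exact Real.rpow_le_rpow dist_nonneg hd1 hrpos.le
  -- volume of the ball
  have hvol : (volume (ball (auxPt n xb) ‖xb‖)).toReal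
      = ‖xb‖ ^ n * (volume (ball (0 : En n) 1)).toReal := by
    rw [Measure.addHaar_ball volume _ hx.le, finrank_euclideanSpace_fin,
      ENNReal.toReal_mul, ENNReal.toReal_ofReal (by positivity)]
  -- final algebra
  have halg : (volume (ball (0 : En n) 1)).toReal * (4 : ℝ) ^ (-r) * ‖xb‖ ^ (-σ)
      = (volume (ball (auxPt n xb) ‖xb‖)).toReal * (1 / (4 * ‖xb‖) ^ r) := by
    rw [hvol]
    have h4 : (4 * ‖xb‖ : ℝ) ^ r = 4 ^ r * ‖xb‖ ^ r :=
      Real.mul_rpow (by norm_num) hx.le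
    rw [h4]
    have hnpow : (‖xb‖ : ℝ) ^ n = ‖xb‖ ^ (n : ℝ) := (Real.rpow_natCast _ n).symm
    rw [hnpow, Real.rpow_neg (by norm_num : (0:ℝ) ≤ 4)]
    have : ‖xb‖ ^ ((n : ℝ)) / ‖xb‖ ^ r = ‖xb‖ ^ (-σ) := by
      rw [← Real.rpow_sub hx]
      congr 1
      rw [hr]; ring
    field_simp
    have hmm : ‖xb‖ ^ (-σ) * ‖xb‖ ^ r = ‖xb‖ ^ n := by
      rw [← Real.rpow_natCast ‖xb‖ n, ← Real.rpow_add hx]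
      congr 1
      rw [hr]; ring
    linear_combination (volume (ball (0 : En n) 1)).toReal * hmm + (volume (ball (0 : En n) 1)).toReal * hnpow
  calc (volume (ball (0 : En n) 1)).toReal * (4 : ℝ) ^ (-r) * ‖xb‖ ^ (-σ)
      = (volume (ball (auxPt n xb) ‖xb‖)).toReal * (1 / (4 * ‖xb‖) ^ r) := halg
    _ ≤ ∫ y in ball (auxPt n xb) ‖xb‖, f y := hlow
    _ ≤ ∫ y in S, f y := hmono
end
end
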